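/- arXiv:math/9911075 — 3 statements merged into one kernel-verified Lean document; each statement's English description precedes it below -/
import Mathlib

section
/- Let m ≥ 1 be an integer. Let (π_k)_{k≥0} be a sequence of m×m matrices over L with limsup_{k→∞} |π_k|^{q^{-k}} < ∞ and let (φ_j)_{j≥0} be a sequence in L^m with limsup_{j→∞} |φ_j|^{q^{-j}} < ∞ (these are the conditions that the series P(τ)z = Σ_{k≥0} π_k z^{q^k} and f(t) = Σ_{j≥0} φ_j t^{q^j}/D_j have positive radii of convergence). Then for every y_0 ∈ L^m there is exactly one sequence (y_l)_{l≥0} in L^m beginning with the given y_0 and satisfying, for every l ≥ 0, the recurrence y_{l+1} = Σ_{n+k=l} π_k^q · y_n^{q^{k+1}} · [n+1]^{q^k}[n+2]^{q^{k-1}}⋯[n+k]^q + φ_l^q (the product of brackets being omitted when k = 0); this recurrence expresses that the formal series y(t) = Σ_{i≥0} y_i t^{q^i}/D_i is the unique formal solution of the regular system dy(t) = P(τ)y(t) + f(t) with initial condition lim_{t→0} t^{-1}y(t) = y_0. Moreover this sequence satisfies limsup_{l→∞} |y_l|^{q^{-l}} < ∞, i.e. the solution series y has a positive radius of convergence. 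-/
/- Context: `q = p^υ`, `L` is an algebraically closed field of characteristic `p`,
complete w.r.t. the nontrivial nonarchimedean absolute value `abv`, `x ∈ L` with
`|x| = q⁻¹`, `[n] = x^{q^n} - x`, and `D_0 = 1`, `D_i = [i]·D_{i-1}^q` are the
Carlitz factorials. -/

/-- The Carlitz bracket `[n] = x^{q^n} - x`. -/
def carlitzBr (q : ℕ) {L : Type*} [CommRing L] (x : L) (n : ℕ) : L :=
  x ^ q ^ n - x

/-- A formal series `Σ_{n≥0} c_n t^{q^n}/D_n` has a positive radius of convergence
iff `limsup_{n→∞} |c_n|^{q^{-n}} < ∞`. -/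
def HasPosRadius (q : ℕ) {L : Type*} [Field L] (abv : AbsoluteValue L ℝ)
    (c : ℕ → L) : Prop :=
  Filter.limsup (fun n => ENNReal.ofReal (abv (c n)) ^ (((q : ℝ) ^ n)⁻¹))
    Filter.atTop < ⊤

/-- The coefficient recurrence (8) of the regular system `dy = P(τ)y + f`:
`y_{l+1} = Σ_{n+k=l} π_k^q · y_n^{q^{k+1}} · [n+1]^{q^k} ⋯ [n+k]^q + φ_l^q`. -/
def RegularRecurrence (q : ℕ) {L : Type*} [Field L] (x : L) {m : ℕ}
    (π : ℕ → Matrix (Fin m) (Fin m) L) (φ : ℕ → Fin m → L)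
    (y : ℕ → Fin m → L) : Prop :=
  ∀ l : ℕ, y (l + 1) =
    (∑ nk ∈ Finset.HasAntidiagonal.antidiagonal l,
      (∏ s ∈ Finset.Icc 1 nk.2, carlitzBr q x (nk.1 + s) ^ q ^ (nk.2 + 1 - s)) •
        Matrix.mulVec ((π nk.2).map (fun e => e ^ q))
          (fun i => y nk.1 i ^ q ^ (nk.2 + 1)))
    + fun i => φ l i ^ q

section Aux
variable {L : Type*} [Field L] {m : ℕ}

noncomputable def regStep (q : ℕ) (x : L)
    (π : ℕ → Matrix (Fin m) (Fin m) L) (φ : ℕ → Fin m → L)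
    (prev : ℕ → Fin m → L) (l : ℕ) : Fin m → L :=
  (∑ nk ∈ Finset.HasAntidiagonal.antidiagonal l,
      (∏ s ∈ Finset.Icc 1 nk.2, carlitzBr q x (nk.1 + s) ^ q ^ (nk.2 + 1 - s)) •
        Matrix.mulVec ((π nk.2).map (fun e => e ^ q))
          (fun i => prev nk.1 i ^ q ^ (nk.2 + 1)))
    + fun i => φ l i ^ q

lemma regRec_iff (q : ℕ) (x : L) (π : ℕ → Matrix (Fin m) (Fin m) L)
    (φ : ℕ → Fin m → L) (y : ℕ → Fin m → L) :
    RegularRecurrence q x π φ y ↔ ∀ l, y (l + 1) = regStep q x π φ y l := Iff.rfl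

lemma regStep_congr (q : ℕ) (x : L) (π : ℕ → Matrix (Fin m) (Fin m) L)
    (φ : ℕ → Fin m → L) {a b : ℕ → Fin m → L} {l : ℕ}
    (h : ∀ n ≤ l, a n = b n) : regStep q x π φ a l = regStep q x π φ b l := by
  unfold regStep
  congr 1
  refine Finset.sum_congr rfl fun nk hnk => ?_
  rw [Finset.HasAntidiagonal.mem_antidiagonal] at hnk
  rw [h nk.1 (by omega)]

noncomputable def regAux (q : ℕ) (x : L) (π : ℕ → Matrix (Fin m) (Fin m) L)
    (φ : ℕ → Fin m → L) (y0 : Fin m → L) : ℕ → ℕ → Fin m → L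
  | 0 => fun _ => y0
  | (l+1) => fun n => if n = l + 1 then regStep q x π φ (regAux q x π φ y0 l) l
      else regAux q x π φ y0 l n

noncomputable def regSol (q : ℕ) (x : L) (π : ℕ → Matrix (Fin m) (Fin m) L)
    (φ : ℕ → Fin m → L) (y0 : Fin m → L) (n : ℕ) : Fin m → L :=
  regAux q x π φ y0 n n

lemma regAux_stable (q : ℕ) (x : L) (π : ℕ → Matrix (Fin m) (Fin m) L)
    (φ : ℕ → Fin m → L) (y0 : Fin m → L) :
    ∀ l n, n ≤ l → regAux q x π φ y0 l n = regSol q x π φ y0 n := by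
  intro l
  induction l with
  | zero => intro n hn; interval_cases n; rfl
  | succ l ih =>
    intro n hn
    rcases eq_or_lt_of_le hn with h | h
    · subst h; rfl
    · have hn' : n ≤ l := by omega
      show (if n = l + 1 then _ else regAux q x π φ y0 l n) = _
      rw [if_neg (by omega), ih n hn']

lemma regSol_zero (q : ℕ) (x : L) (π : ℕ → Matrix (Fin m) (Fin m) L)
    (φ : ℕ → Fin m → L) (y0 : Fin m → L) : regSol q x π φ y0 0 = y0 := rfl

lemma regSol_succ (q : ℕ) (x : L) (π : ℕ → Matrix (Fin m) (Fin m) L)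
    (φ : ℕ → Fin m → L) (y0 : Fin m → L) (l : ℕ) :
    regSol q x π φ y0 (l + 1) = regStep q x π φ (regSol q x π φ y0) l := by
  show (if l + 1 = l + 1 then regStep q x π φ (regAux q x π φ y0 l) l else _) = _
  rw [if_pos rfl]
  exact regStep_congr q x π φ (fun n hn => regAux_stable q x π φ y0 l n hn)

lemma regSol_recurrence (q : ℕ) (x : L) (π : ℕ → Matrix (Fin m) (Fin m) L)
    (φ : ℕ → Fin m → L) (y0 : Fin m → L) :
    RegularRecurrence q x π φ (regSol q x π φ y0) :=
  (regRec_iff q x π φ _).2 (regSol_succ q x π φ y0)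

lemma regSol_unique (q : ℕ) (x : L) (π : ℕ → Matrix (Fin m) (Fin m) L)
    (φ : ℕ → Fin m → L) (y0 : Fin m → L) (z : ℕ → Fin m → L)
    (h0 : z 0 = y0) (hz : RegularRecurrence q x π φ z) :
    z = regSol q x π φ y0 := by
  funext l
  induction l using Nat.strong_induction_on with
  | _ l ih =>
    match l with
    | 0 => exact h0
    | l + 1 =>
      rw [(regRec_iff q x π φ z).1 hz l, regSol_succ,
        regStep_congr q x π φ (fun n hn => ih n (by omega))]

/-- nonarchimedean bound for finite sums -/
lemma abv_sum_le {L : Type*} [Field L] (abv : AbsoluteValue L ℝ)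
    (hna : IsNonarchimedean (abv : L → ℝ)) {ι : Type*} (s : Finset ι)
    (f : ι → L) (B : ℝ) (hB : 0 ≤ B) (h : ∀ a ∈ s, abv (f a) ≤ B) :
    abv (∑ a ∈ s, f a) ≤ B := by
  classical
  induction s using Finset.cons_induction with
  | empty => simpa using hB
  | cons a s ha ih =>
    rw [Finset.sum_cons]
    refine le_trans (hna _ _) (max_le (h a (Finset.mem_cons_self a s)) ?_)
    exact ih (fun b hb => h b (Finset.mem_cons_of_mem hb))

/-- extract a geometric bound from positive radius -/
lemma exists_geom_bound {L : Type*} [Field L] (abv : AbsoluteValue L ℝ)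
    (q : ℕ) (hq2 : 2 ≤ q) (c : ℕ → L) (h : HasPosRadius q abv c) :
    ∃ C : ℝ, 1 ≤ C ∧ ∀ n, abv (c n) ≤ C ^ q ^ n := by
  classical
  have hlim : Filter.limsup
      (fun n => ENNReal.ofReal (abv (c n)) ^ (((q : ℝ) ^ n)⁻¹)) Filter.atTop < ⊤ := h
  set S := Filter.limsup
      (fun n => ENNReal.ofReal (abv (c n)) ^ (((q : ℝ) ^ n)⁻¹)) Filter.atTop with hSdef
  have hS : S < S + 1 := ENNReal.lt_add_right hlim.ne one_ne_zero
  have hev : ∀ᶠ n in Filter.atTop,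
      ENNReal.ofReal (abv (c n)) ^ (((q : ℝ) ^ n)⁻¹) < S + 1 :=
    Filter.eventually_lt_of_limsup_lt hS
  obtain ⟨N, hN⟩ := Filter.eventually_atTop.1 hev
  have hbt : S + 1 ≠ ⊤ := ENNReal.add_ne_top.2 ⟨hlim.ne, ENNReal.one_ne_top⟩
  obtain ⟨M, hM⟩ : ∃ M : ℝ, ∀ n < N, abv (c n) ≤ M := by
    refine ⟨(Finset.range N).sum (fun n => abv (c n)), fun n hn => ?_⟩
    exact Finset.single_le_sum (fun i _ => abv.nonneg _) (Finset.mem_range.2 hn)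
  refine ⟨max 1 (max (S + 1).toReal M), le_max_left _ _, fun n => ?_⟩
  set C : ℝ := max 1 (max (S + 1).toReal M) with hC
  have hC1 : (1:ℝ) ≤ C := le_max_left _ _
  have hqpos : (0:ℝ) < (q:ℝ) ^ n := by positivity
  by_cases hn : n < N
  · calc abv (c n) ≤ M := hM n hn
      _ ≤ C := le_trans (le_max_right _ _) (le_max_right _ _)
      _ ≤ C ^ q ^ n := le_self_pow₀ (by linarith) (by positivity)
  · have h2 := ENNReal.rpow_le_rpow (hN n (by omega)).le hqpos.le
    rw [← ENNReal.rpow_mul, inv_mul_cancel₀ hqpos.ne', ENNReal.rpow_one] at h2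
    have hfin : (S + 1) ^ ((q:ℝ) ^ n) ≠ ⊤ := ENNReal.rpow_ne_top_of_nonneg hqpos.le hbt
    have h4 := ENNReal.toReal_mono hfin h2
    rw [ENNReal.toReal_ofReal (abv.nonneg _)] at h4
    have hcast : ((q:ℝ)) ^ n = ((q ^ n : ℕ) : ℝ) := by push_cast; ring
    calc abv (c n) ≤ ((S + 1) ^ ((q:ℝ) ^ n)).toReal := h4
      _ = (S + 1).toReal ^ ((q:ℝ) ^ n) := (ENNReal.toReal_rpow _ _).symm
      _ = (S + 1).toReal ^ (q ^ n : ℕ) := by rw [hcast, Real.rpow_natCast]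
      _ ≤ C ^ q ^ n := pow_le_pow_left₀ ENNReal.toReal_nonneg
          (le_trans (le_max_left _ _) (le_max_right _ _)) _

end Aux

/-- the regular system `dy = P(τ)y + f` with initial condition
`lim_{t→0} t⁻¹ y(t) = y_0` has a unique formal solution `y = Σ y_i t^{q^i}/D_i`
(given by the recurrence), and this solution has a positive radius of convergence. -/
theorem regular_system_unique_convergent_solution
    (p υ q : ℕ) [Fact p.Prime] (hυ : 1 ≤ υ) (hq : q = p ^ υ)
    (L : Type*) [Field L] [IsAlgClosed L] [CharP L p]
    (abv : AbsoluteValue L ℝ) (hna : IsNonarchimedean (abv : L → ℝ))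
    (x : L) (hx : abv x = (q : ℝ)⁻¹)
    (m : ℕ) (hm : 1 ≤ m)
    (π : ℕ → Matrix (Fin m) (Fin m) L) (φ : ℕ → Fin m → L)
    (hπ : ∀ i j : Fin m, HasPosRadius q abv (fun k => π k i j))
    (hφ : ∀ i : Fin m, HasPosRadius q abv (fun j => φ j i))
    (y0 : Fin m → L) :
    ∃ y : ℕ → Fin m → L,
      (y 0 = y0 ∧ RegularRecurrence q x π φ y) ∧
      (∀ i : Fin m, HasPosRadius q abv (fun l => y l i)) ∧
      (∀ z : ℕ → Fin m → L, z 0 = y0 → RegularRecurrence q x π φ z → z = y) := by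
  classical
  have hq2 : 2 ≤ q := by
    have hp : 2 ≤ p := (Fact.out : p.Prime).two_le
    calc 2 ≤ p := hp
      _ ≤ p ^ υ := Nat.le_self_pow (by omega) p
      _ = q := hq.symm
  set Y : ℕ → Fin m → L := regSol q x π φ y0 with hY
  refine ⟨Y, ⟨regSol_zero q x π φ y0, regSol_recurrence q x π φ y0⟩, ?_,
    fun z h0 hz => regSol_unique q x π φ y0 z h0 hz⟩
  -- choose geometric bounds
  choose Cπ hCπ1 hCπ2 using fun i j => exists_geom_bound abv q hq2 _ (hπ i j)
  choose Cφ hCφ1 hCφ2 using fun i => exists_geom_bound abv q hq2 _ (hφ i)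
  set C : ℝ := 1 + (∑ i, ∑ j, Cπ i j) + (∑ i, Cφ i) + (∑ i, abv (y0 i)) with hCdef
  have hCπnn : ∀ i j : Fin m, (0:ℝ) ≤ Cπ i j := fun i j => le_trans zero_le_one (hCπ1 i j)
  have hCφnn : ∀ i : Fin m, (0:ℝ) ≤ Cφ i := fun i => le_trans zero_le_one (hCφ1 i)
  have hs1 : (0:ℝ) ≤ ∑ i, ∑ j, Cπ i j :=
    Finset.sum_nonneg fun i _ => Finset.sum_nonneg fun j _ => hCπnn i j
  have hs2 : (0:ℝ) ≤ ∑ i, Cφ i := Finset.sum_nonneg fun i _ => hCφnn i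
  have hs3 : (0:ℝ) ≤ ∑ i, abv (y0 i) := Finset.sum_nonneg fun i _ => abv.nonneg _
  have hC1 : (1:ℝ) ≤ C := by rw [hCdef]; linarith
  have hC0 : (0:ℝ) < C := lt_of_lt_of_le zero_lt_one hC1
  have hCπle : ∀ i j : Fin m, Cπ i j ≤ C := by
    intro i j
    have h1 : Cπ i j ≤ ∑ j', Cπ i j' :=
      Finset.single_le_sum (fun j' _ => hCπnn i j') (Finset.mem_univ j)
    have h2 : (∑ j', Cπ i j') ≤ ∑ i', ∑ j', Cπ i' j' :=
      Finset.single_le_sum (fun i' _ => Finset.sum_nonneg fun j' _ => hCπnn i' j')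
        (Finset.mem_univ i)
    rw [hCdef]; linarith
  have hCφle : ∀ i : Fin m, Cφ i ≤ C := by
    intro i
    have h1 : Cφ i ≤ ∑ i', Cφ i' :=
      Finset.single_le_sum (fun i' _ => hCφnn i') (Finset.mem_univ i)
    rw [hCdef]; linarith
  have hπC : ∀ (k : ℕ) (i j : Fin m), abv (π k i j) ≤ C ^ q ^ k := fun k i j =>
    le_trans (hCπ2 i j k) (pow_le_pow_left₀ (hCπnn i j) (hCπle i j) _)
  have hφC : ∀ (l : ℕ) (i : Fin m), abv (φ l i) ≤ C ^ q ^ l := fun l i =>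
    le_trans (hCφ2 i l) (pow_le_pow_left₀ (hCφnn i) (hCφle i) _)
  have hy0C : ∀ i : Fin m, abv (y0 i) ≤ C := by
    intro i
    have h1 : abv (y0 i) ≤ ∑ i', abv (y0 i') :=
      Finset.single_le_sum (fun i' _ => abv.nonneg _) (Finset.mem_univ i)
    rw [hCdef]; linarith
  -- brackets are small
  have hbr : ∀ n : ℕ, abv (carlitzBr q x n) ≤ 1 := by
    intro n
    have hxle : abv x ≤ 1 := by
      rw [hx]
      rw [inv_le_one_iff₀]
      right; exact_mod_cast le_trans (by norm_num) hq2
    unfold carlitzBr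
    rw [sub_eq_add_neg]
    refine le_trans (hna _ _) (max_le ?_ ?_)
    · rw [map_pow]; exact pow_le_one₀ (abv.nonneg _) hxle
    · rw [abv.map_neg]; exact hxle
  have hbrp : ∀ (n k : ℕ),
      abv (∏ s ∈ Finset.Icc 1 k, carlitzBr q x (n + s) ^ q ^ (k + 1 - s)) ≤ 1 := by
    intro n k
    rw [map_prod]
    refine Finset.prod_le_one (fun s _ => abv.nonneg _) (fun s _ => ?_)
    rw [map_pow]
    exact pow_le_one₀ (abv.nonneg _) (hbr _)
  -- exponent function
  set ee : ℕ → ℕ := fun n => if n = 0 then 1 else 4 * q ^ n - 2 with hee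
  -- main inductive bound
  have key : ∀ l : ℕ, ∀ i : Fin m, abv (Y l i) ≤ C ^ ee l := by
    intro l
    induction l using Nat.strong_induction_on with
    | _ l ih =>
      match l with
      | 0 =>
        intro i
        have h0 : Y 0 i = y0 i := by rw [hY, regSol_zero]
        rw [h0]
        simpa [hee] using hy0C i
      | l + 1 =>
        intro i
        have hYsucc : Y (l + 1) = regStep q x π φ Y l := regSol_succ q x π φ y0 l
        have hrow : Y (l + 1) i =
            (∑ nk ∈ Finset.HasAntidiagonal.antidiagonal l,
              (∏ s ∈ Finset.Icc 1 nk.2, carlitzBr q x (nk.1 + s) ^ q ^ (nk.2 + 1 - s)) *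
                (Matrix.mulVec ((π nk.2).map (fun t => t ^ q))
                  (fun j => Y nk.1 j ^ q ^ (nk.2 + 1)) i)) + φ l i ^ q := by
          rw [hYsucc]
          show (regStep q x π φ Y l) i = _
          unfold regStep
          rw [Pi.add_apply, Finset.sum_apply]
          simp [Pi.smul_apply, smul_eq_mul]
        have heesucc : ee (l + 1) = 4 * q ^ (l + 1) - 2 := by simp [hee]
        have hql1 : 2 ≤ q ^ (l + 1) := le_trans hq2 (Nat.le_self_pow (by omega) q)
        have hBnn : (0:ℝ) ≤ C ^ ee (l + 1) := pow_nonneg hC0.le _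
        rw [hrow]
        refine le_trans (hna _ _) (max_le ?_ ?_)
        · -- the big sum
          refine abv_sum_le abv hna _ _ _ hBnn (fun nk hnk => ?_)
          rw [Finset.HasAntidiagonal.mem_antidiagonal] at hnk
          obtain ⟨n, k⟩ := nk
          simp only at hnk ⊢
          -- exponent inequality
          have hab : q ^ (k + 1) * q ^ n = q ^ (l + 1) := by
            rw [← pow_add]; congr 1; omega
          have h2b : 2 ≤ q ^ (k + 1) := le_trans hq2 (Nat.le_self_pow (by omega) q)
          have hexp : q ^ (k + 1) + ee n * q ^ (k + 1) ≤ 4 * q ^ (l + 1) - 2 := by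
            by_cases hn0 : n = 0
            · subst hn0
              have hee0 : ee 0 = 1 := by simp [hee]
              rw [hee0]
              have hkl : q ^ (k + 1) = q ^ (l + 1) := by
                simpa using hab
              rw [hkl]
              omega
            · have heen : ee n = 4 * q ^ n - 2 := by simp [hee, hn0]
              have h2a : 2 ≤ q ^ n := le_trans hq2 (Nat.le_self_pow hn0 q)
              rw [heen, Nat.sub_mul]
              have hm4 : 4 * q ^ n * q ^ (k + 1) = 4 * q ^ (l + 1) := by
                rw [mul_assoc, mul_comm (q ^ n), hab]
              rw [hm4]
              have hbP : 2 * q ^ (k + 1) ≤ q ^ (l + 1) := by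
                calc 2 * q ^ (k + 1) ≤ q ^ n * q ^ (k + 1) :=
                      Nat.mul_le_mul_right _ h2a
                  _ = q ^ (l + 1) := by rw [mul_comm]; exact hab
              omega
          -- bound the matrix-vector entry
          have hmv : abv ((Matrix.mulVec ((π k).map (fun t => t ^ q))
              (fun j => Y n j ^ q ^ (k + 1))) i) ≤ C ^ ee (l + 1) := by
            have hmv0 : (Matrix.mulVec ((π k).map (fun t => t ^ q))
                (fun j => Y n j ^ q ^ (k + 1))) i
                = ∑ j, ((π k).map (fun t => t ^ q)) i j * (Y n j ^ q ^ (k + 1)) := by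
              simp [Matrix.mulVec, dotProduct]
            rw [hmv0]
            refine abv_sum_le abv hna _ _ _ hBnn (fun j _ => ?_)
            have h1 : abv (((π k).map (fun t => t ^ q)) i j) ≤ C ^ q ^ (k + 1) := by
              rw [Matrix.map_apply, map_pow]
              calc (abv (π k i j)) ^ q ≤ (C ^ q ^ k) ^ q :=
                    pow_le_pow_left₀ (abv.nonneg _) (hπC k i j) q
                _ = C ^ q ^ (k + 1) := by rw [← pow_mul, ← pow_succ]
            have h2 : abv (Y n j ^ q ^ (k + 1)) ≤ (C ^ ee n) ^ q ^ (k + 1) := by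
              rw [map_pow]
              exact pow_le_pow_left₀ (abv.nonneg _) (ih n (by omega) j) _
            calc abv (((π k).map (fun t => t ^ q)) i j * (Y n j ^ q ^ (k + 1)))
                = abv (((π k).map (fun t => t ^ q)) i j) * abv (Y n j ^ q ^ (k + 1)) :=
                  map_mul abv _ _
              _ ≤ C ^ q ^ (k + 1) * (C ^ ee n) ^ q ^ (k + 1) := by
                  refine mul_le_mul h1 h2 (abv.nonneg _) (pow_nonneg hC0.le _)
              _ = C ^ (q ^ (k + 1) + ee n * q ^ (k + 1)) := by
                  rw [← pow_mul, ← pow_add]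
              _ ≤ C ^ ee (l + 1) := by
                  rw [heesucc]; exact pow_le_pow_right₀ hC1 hexp
          calc abv ((∏ s ∈ Finset.Icc 1 k, carlitzBr q x (n + s) ^ q ^ (k + 1 - s)) *
                (Matrix.mulVec ((π k).map (fun t => t ^ q))
                  (fun j => Y n j ^ q ^ (k + 1)) i))
              = abv (∏ s ∈ Finset.Icc 1 k, carlitzBr q x (n + s) ^ q ^ (k + 1 - s)) *
                abv ((Matrix.mulVec ((π k).map (fun t => t ^ q))
                  (fun j => Y n j ^ q ^ (k + 1))) i) := map_mul abv _ _
            _ ≤ 1 * (C ^ ee (l + 1)) := mul_le_mul (hbrp n k) hmv (abv.nonneg _) zero_le_one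
            _ = C ^ ee (l + 1) := one_mul _
        · -- the φ term
          rw [map_pow]
          calc (abv (φ l i)) ^ q ≤ (C ^ q ^ l) ^ q :=
                pow_le_pow_left₀ (abv.nonneg _) (hφC l i) q
            _ = C ^ q ^ (l + 1) := by rw [← pow_mul, ← pow_succ]
            _ ≤ C ^ ee (l + 1) := by
                rw [heesucc]
                refine pow_le_pow_right₀ hC1 ?_
                omega
  -- positive radius of convergence
  intro i
  have hb : ∀ l : ℕ, ENNReal.ofReal (abv (Y l i)) ^ (((q:ℝ) ^ l)⁻¹) ≤
      ENNReal.ofReal (C ^ 4) := by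
    intro l
    have heele : ee l ≤ 4 * q ^ l := by
      by_cases h : l = 0
      · simp [hee, h]
      · simp only [hee, if_neg h]; omega
    have h1 : abv (Y l i) ≤ C ^ (4 * q ^ l) :=
      le_trans (key l i) (pow_le_pow_right₀ hC1 heele)
    have h2 : ENNReal.ofReal (abv (Y l i)) ≤ ENNReal.ofReal C ^ (4 * q ^ l) := by
      rw [← ENNReal.ofReal_pow hC0.le]
      exact ENNReal.ofReal_le_ofReal h1
    have hqlnn : (0:ℝ) ≤ ((q:ℝ) ^ l)⁻¹ := by positivity
    have h3 := ENNReal.rpow_le_rpow h2 hqlnn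
    refine le_trans h3 ?_
    rw [← ENNReal.rpow_natCast (ENNReal.ofReal C) (4 * q ^ l), ← ENNReal.rpow_mul]
    have hql0 : ((q:ℝ)) ^ l ≠ 0 := by positivity
    have hexp : ((4 * q ^ l : ℕ) : ℝ) * (((q:ℝ)) ^ l)⁻¹ = (4:ℝ) := by
      push_cast
      field_simp
    rw [hexp, show (4:ℝ) = ((4:ℕ):ℝ) by norm_num, ENNReal.rpow_natCast,
      ← ENNReal.ofReal_pow hC0.le]
  unfold HasPosRadius
  calc Filter.limsup (fun l => ENNReal.ofReal (abv (Y l i)) ^ (((q:ℝ) ^ l)⁻¹))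
        Filter.atTop ≤ ENNReal.ofReal (C ^ 4) :=
        Filter.limsup_le_of_le (by isBoundedDefault) (Filter.Eventually.of_forall hb)
    _ < ⊤ := ENNReal.ofReal_lt_top
end

section
/- Let m ≥ 1 and a_0, a_1, …, a_m ∈ L with a_m ≠ 0, and for n ≥ m set Φ_n = a_0 + Σ_{j=1}^{m} a_j [n−j+1]^{q^{j−1}}[n−j+2]^{q^{j−2}}⋯[n]. Then there exist real constants μ_1 > 0 and μ_2 > 0 and an integer n_0 ≥ m such that |Φ_n| ≥ μ_1 · q^{−μ_2 q^n} for all n ≥ n_0. In particular, Φ_n ≠ 0 for all sufficiently large n. -/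
lemma aux_abv_sum_le {L : Type*} [Field L] (abv : AbsoluteValue L ℝ)
    (hna : IsNonarchimedean (abv : L → ℝ)) {ι : Type*} (s : Finset ι) (f : ι → L)
    {C : ℝ} (hC : 0 ≤ C) (h : ∀ i ∈ s, abv (f i) ≤ C) :
    abv (∑ i ∈ s, f i) ≤ C := by
  classical
  induction s using Finset.induction with
  | empty => simpa using hC
  | @insert i s hx ih =>
      rw [Finset.sum_insert hx]
      refine le_trans (hna _ _) (max_le (h i (Finset.mem_insert_self _ _)) ?_)
      exact ih fun j hj => h j (Finset.mem_insert_of_mem hj)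

lemma aux_dom {L : Type*} [Field L] (abv : AbsoluteValue L ℝ)
    (hna : IsNonarchimedean (abv : L → ℝ)) {u t : L} (h : abv t < abv u) :
    abv u ≤ abv (u + t) := by
  have h2 : abv u ≤ max (abv (u + t)) (abv t) := by
    have := hna (u + t) (-t)
    simpa using this
  rcases max_cases (abv (u + t)) (abv t) with ⟨he, _⟩ | ⟨he, hlt⟩
  · exact h2.trans (le_of_eq he)
  · exact absurd ((h2.trans (le_of_eq he))) (not_le.mpr h)

/-- with `a_m ≠ 0` and
`Φ_n = a_0 + Σ_{j=1}^m a_j [n-j+1]^{q^{j-1}} ⋯ [n]` there are `μ_1, μ_2 > 0` and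
`n_0 ≥ m` such that `|Φ_n| ≥ μ_1 · q^{-μ_2 q^n}` for all `n ≥ n_0`; in particular
`Φ_n ≠ 0` for all sufficiently large `n`. -/
theorem Phi_lower_bound
    (p υ q : ℕ) [Fact p.Prime] (hυ : 1 ≤ υ) (hq : q = p ^ υ)
    (L : Type*) [Field L] [IsAlgClosed L] [CharP L p]
    (abv : AbsoluteValue L ℝ) (hna : IsNonarchimedean (abv : L → ℝ))
    (x : L) (hx : abv x = (q : ℝ)⁻¹)
    (m : ℕ) (hm : 1 ≤ m) (a : ℕ → L) (ham : a m ≠ 0)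
    (Φ : ℕ → L)
    (hΦ : ∀ n : ℕ, Φ n = a 0 + ∑ j ∈ Finset.Icc 1 m, a j *
        ∏ s ∈ Finset.Icc 1 j, carlitzBr q x (n - j + s) ^ q ^ (j - s)) :
    ∃ μ1 : ℝ, 0 < μ1 ∧ ∃ μ2 : ℝ, 0 < μ2 ∧ ∃ n0 : ℕ, m ≤ n0 ∧
      ∀ n : ℕ, n0 ≤ n →
        μ1 * (q : ℝ) ^ (-(μ2 * (q : ℝ) ^ n)) ≤ abv (Φ n) ∧ Φ n ≠ 0 := by
  classical
  open Polynomial Finset in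
  have hp2 : 2 ≤ p := (Fact.out : p.Prime).two_le
  have hq2 : 2 ≤ q := by
    subst hq
    calc 2 ≤ p := hp2
    _ ≤ p ^ υ := Nat.le_self_pow (by omega) p
  have hq0R : (0 : ℝ) < q := by positivity
  have hq1R : (1 : ℝ) ≤ q := by exact_mod_cast (by omega : 1 ≤ q)
  -- Frobenius
  have frob : ∀ (u v : L) (t : ℕ), (u - v) ^ q ^ t = u ^ q ^ t - v ^ q ^ t := by
    intro u v t
    rw [hq, ← pow_mul]
    exact sub_pow_char_pow u v (υ * t)
  -- the polynomial
  set F : Polynomial L := Polynomial.C (a 0) + ∑ j ∈ Finset.Icc 1 m,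
      Polynomial.C (a j) * ∏ t ∈ Finset.range j, (Polynomial.X - Polynomial.C (x ^ q ^ t))
    with hF
  have heval : ∀ n, m ≤ n → Φ n = F.eval (x ^ q ^ n) := by
    intro n hn
    rw [hΦ, hF]
    rw [Polynomial.eval_add, Polynomial.eval_C, Polynomial.eval_finset_sum]
    congr 1
    refine Finset.sum_congr rfl fun j hj => ?_
    rw [Polynomial.eval_mul, Polynomial.eval_C, Polynomial.eval_prod]
    congr 1
    obtain ⟨hj1, hj2⟩ := Finset.mem_Icc.mp hj
    refine Finset.prod_bij' (fun s _ => j - s) (fun t _ => j - t) ?_ ?_ ?_ ?_ ?_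
    · intro s hs
      obtain ⟨h1, h2⟩ := Finset.mem_Icc.mp hs
      show j - s ∈ Finset.range j
      exact Finset.mem_range.mpr (by omega)
    · intro t ht
      have := Finset.mem_range.mp ht
      show j - t ∈ Finset.Icc 1 j
      exact Finset.mem_Icc.mpr (by omega)
    · intro s hs
      obtain ⟨h1, h2⟩ := Finset.mem_Icc.mp hs
      show j - (j - s) = s
      omega
    · intro t ht
      have := Finset.mem_range.mp ht
      show j - (j - t) = t
      omega
    · intro s hs
      obtain ⟨h1, h2⟩ := Finset.mem_Icc.mp hs
      rw [Polynomial.eval_sub, Polynomial.eval_X, Polynomial.eval_C]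
      show carlitzBr q x (n - j + s) ^ q ^ (j - s) = x ^ q ^ n - x ^ q ^ (j - s)
      unfold carlitzBr
      rw [frob, ← pow_mul, ← pow_add]
      have hexp : n - j + s + (j - s) = n := by omega
      rw [hexp]
  -- leading coefficient
  have hmon : ∀ j : ℕ, (∏ t ∈ Finset.range j,
      (Polynomial.X - Polynomial.C (x ^ q ^ t))).Monic := by
    intro j
    exact Polynomial.monic_prod_of_monic _ _ fun t _ => Polynomial.monic_X_sub_C _
  have hdeg : ∀ j : ℕ, (∏ t ∈ Finset.range j,
      (Polynomial.X - Polynomial.C (x ^ q ^ t))).natDegree = j := by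
    intro j
    rw [Polynomial.natDegree_prod_of_monic _ _ fun t _ => Polynomial.monic_X_sub_C _]
    simp only [Polynomial.natDegree_X_sub_C]
    simp
  have hcoeff : F.coeff m = a m := by
    rw [hF, Polynomial.coeff_add, Polynomial.coeff_C, if_neg (by omega),
      Polynomial.finset_sum_coeff, zero_add]
    rw [Finset.sum_eq_single m]
    · rw [Polynomial.coeff_C_mul]
      have : (∏ t ∈ Finset.range m, (Polynomial.X - Polynomial.C (x ^ q ^ t))).coeff m = 1 := by
        have h1 := (hmon m).coeff_natDegree
        rwa [hdeg m] at h1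
      rw [this, mul_one]
    · intro j hj hjm
      have hj2 := (Finset.mem_Icc.mp hj).2
      rw [Polynomial.coeff_C_mul]
      rw [Polynomial.coeff_eq_zero_of_natDegree_lt (by rw [hdeg j]; omega), mul_zero]
    · intro h
      exact absurd (Finset.mem_Icc.mpr ⟨hm, le_refl m⟩) h
  have hF0 : F ≠ 0 := fun h => ham (by rw [← hcoeff, h, Polynomial.coeff_zero])
  set r := F.natTrailingDegree with hr
  set b := F.coeff r with hbdef
  have hb : b ≠ 0 := by
    have := Polynomial.trailingCoeff_nonzero_iff_nonzero.mpr hF0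
    rwa [Polynomial.trailingCoeff] at this
  have hbpos : 0 < abv b := abv.pos hb
  set d := F.natDegree with hd
  have hrd : r ≤ d := Polynomial.natTrailingDegree_le_natDegree F
  -- decomposition of eval
  have hdec : ∀ y : L, F.eval y = b * y ^ r + ∑ k ∈ Finset.Icc (r + 1) d,
      F.coeff k * y ^ k := by
    intro y
    rw [Polynomial.eval_eq_sum_range]
    have h1 : ∑ i ∈ Finset.Icc r d, F.coeff i * y ^ i
        = ∑ i ∈ Finset.range (d + 1), F.coeff i * y ^ i := by
      refine Finset.sum_subset ?_ ?_
      · intro i hi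
        have := (Finset.mem_Icc.mp hi).2
        exact Finset.mem_range.mpr (by omega)
      · intro i hi hni
        have hi' := Finset.mem_range.mp hi
        have : i < r := by
          by_contra hcon
          exact hni (Finset.mem_Icc.mpr ⟨by omega, by omega⟩)
        rw [Polynomial.coeff_eq_zero_of_lt_natTrailingDegree this, zero_mul]
    rw [← h1, Finset.Icc_eq_cons_Ioc hrd, Finset.sum_cons, ← Finset.Icc_add_one_left_eq_Ioc]
  -- bound for the tail coefficients
  set C : ℝ := 1 + ∑ k ∈ Finset.Icc (r + 1) d, abv (F.coeff k) with hC
  have hCpos : 0 < C := by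
    rw [hC]
    have : (0 : ℝ) ≤ ∑ k ∈ Finset.Icc (r + 1) d, abv (F.coeff k) :=
      Finset.sum_nonneg fun k _ => abv.nonneg _
    linarith
  have hCb : ∀ k ∈ Finset.Icc (r + 1) d, abv (F.coeff k) ≤ C := by
    intro k hk
    rw [hC]
    have := Finset.single_le_sum (f := fun k => abv (F.coeff k))
      (fun i _ => abv.nonneg _) hk
    linarith
  -- choose n0
  obtain ⟨N, hN⟩ := exists_pow_lt_of_lt_one (div_pos hbpos hCpos) (by norm_num : (1:ℝ)/2 < 1)
  refine ⟨abv b, hbpos, (r : ℝ) + 1, by positivity, max m N, le_max_left _ _, ?_⟩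
  intro n hn
  have hnm : m ≤ n := le_trans (le_max_left _ _) hn
  have hnN : N ≤ n := le_trans (le_max_right _ _) hn
  set y : L := x ^ q ^ n with hy
  have hyabv : abv y = ((q : ℝ)⁻¹) ^ q ^ n := by rw [hy, abv.map_pow, hx]
  have hq_inv_le : ((q : ℝ)⁻¹) ≤ 1 / 2 := by
    rw [one_div]
    exact inv_anti₀ (by norm_num) (by exact_mod_cast hq2)
  have hy1 : abv y ≤ 1 := by
    rw [hyabv]
    exact pow_le_one₀ (by positivity) (inv_le_one_of_one_le₀ hq1R)
  have hylt : abv y < abv b / C := by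
    have h1 : abv y ≤ ((1:ℝ)/2) ^ q ^ n := by
      rw [hyabv]
      exact pow_le_pow_left₀ (by positivity) hq_inv_le _
    have h2 : ((1:ℝ)/2) ^ q ^ n ≤ ((1:ℝ)/2) ^ n :=
      pow_le_pow_of_le_one (by norm_num) (by norm_num)
        (Nat.le_of_lt (Nat.lt_pow_self (by omega : 1 < q)))
    have h3 : ((1:ℝ)/2) ^ n ≤ ((1:ℝ)/2) ^ N :=
      pow_le_pow_of_le_one (by norm_num) (by norm_num) hnN
    calc abv y ≤ _ := h1
    _ ≤ _ := h2
    _ ≤ _ := h3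
    _ < _ := hN
  have hy0 : abv y ≠ 0 := by
    rw [hyabv]
    positivity
  have hypos : 0 < abv y := lt_of_le_of_ne (abv.nonneg _) (Ne.symm hy0)
  -- tail bound
  have htail : abv (∑ k ∈ Finset.Icc (r + 1) d, F.coeff k * y ^ k)
      ≤ C * abv y ^ (r + 1) := by
    refine aux_abv_sum_le abv hna _ _ (by positivity) ?_
    intro k hk
    have hk1 := (Finset.mem_Icc.mp hk).1
    rw [abv.map_mul, abv.map_pow]
    have : abv y ^ k ≤ abv y ^ (r + 1) :=
      pow_le_pow_of_le_one (abv.nonneg _) hy1 hk1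
    calc abv (F.coeff k) * abv y ^ k ≤ C * abv y ^ k :=
          mul_le_mul_of_nonneg_right (hCb k hk) (by positivity)
    _ ≤ C * abv y ^ (r + 1) := mul_le_mul_of_nonneg_left this (le_of_lt hCpos)
  have hmain : abv (b * y ^ r) = abv b * abv y ^ r := by
    rw [abv.map_mul, abv.map_pow]
  have hstrict : abv (∑ k ∈ Finset.Icc (r + 1) d, F.coeff k * y ^ k)
      < abv (b * y ^ r) := by
    rw [hmain]
    calc abv (∑ k ∈ Finset.Icc (r + 1) d, F.coeff k * y ^ k)
        ≤ C * abv y ^ (r + 1) := htail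
    _ = (C * abv y) * abv y ^ r := by ring
    _ < abv b * abv y ^ r := by
        have : C * abv y < abv b := by
          have h := (lt_div_iff₀ hCpos).mp hylt
          linarith
        exact mul_lt_mul_of_pos_right this (by positivity)
  have hlow : abv b * abv y ^ r ≤ abv (Φ n) := by
    rw [heval n hnm, hdec y, ← hmain]
    exact aux_dom abv hna hstrict
  constructor
  · refine le_trans ?_ hlow
    rw [hyabv, ← pow_mul]
    have hpow : ((q : ℝ)⁻¹) ^ (q ^ n * r) = (q : ℝ) ^ (-((q ^ n * r : ℕ) : ℝ)) := by
      rw [Real.rpow_neg (le_of_lt hq0R), Real.rpow_natCast, inv_pow]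
    rw [hpow]
    refine mul_le_mul_of_nonneg_left ?_ (abv.nonneg _)
    refine Real.rpow_le_rpow_of_exponent_le hq1R ?_
    push_cast
    have h0 : (0 : ℝ) ≤ (q : ℝ) ^ n := by positivity
    nlinarith [h0]
  · intro hzero
    have : (0 : ℝ) < abv b * abv y ^ r := by positivity
    rw [hzero] at hlow
    simp only [abv.map_zero] at hlow
    linarith
end

section
/- Let D be a two-sided ideal of 𝒜 which is stable under the coefficient Frobenius map P, in the sense that whenever a finite sum Σ_{i,j} μ_{λ_{ij}} ∘ τ^i ∘ d^j (λ_{ij} ∈ L) belongs to D, the element Σ_{i,j} μ_{λ_{ij}^q} ∘ τ^i ∘ d^j also belongs to D. If D ≠ {0}, then D = 𝒜. In other words, 𝒜 possesses no non-trivial two-sided ideals stable with respect to P. -/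
/- Context: `L` is an algebraically closed field of characteristic `p`, `q = p^υ`,
`x ∈ L` is transcendental over the prime field, `rt` is the unique `q`-th root map
(`rt a ^ q = a`), `[i] = x^{q^i} - x`, `V = L → L` with pointwise addition, and `𝒜`
is the subring of `End(V)` generated by `τ : u ↦ u^q`, the Carlitz derivative
`d : u ↦ (u(xt) - x·u(t))^{1/q}` and the scalar operators `μ_λ : u ↦ λ·u`. -/

/-- The scalar multiplication operator `μ_λ : u ↦ λ·u` on `V = L → L`. -/
def muOp (L : Type*) [CommRing L] (lam : L) : AddMonoid.End (L → L) :=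
{ toFun := fun u t => lam * u t
  map_zero' := by funext t; simp
  map_add' := by intro u v; funext t; simp [mul_add] }

/-- The Frobenius operator `τ : u ↦ u^q` (`q = p^υ`) on `V = L → L`. -/
def tauOp (p υ : ℕ) [Fact p.Prime] (L : Type*) [CommRing L] [CharP L p] :
    AddMonoid.End (L → L) :=
{ toFun := fun u t => u t ^ p ^ υ
  map_zero' := by
    funext t
    exact zero_pow (pow_ne_zero υ (Nat.Prime.ne_zero Fact.out))
  map_add' := by
    intro u v; funext t
    exact add_pow_char_pow (u t) (v t) p υ }

/-- The Carlitz derivative `d : u ↦ (u(xt) - x·u(t))^{1/q}` on `V = L → L`,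
where `rt` is the (unique) `q`-th root map on `L`. -/
def dOp (p υ : ℕ) [Fact p.Prime] (L : Type*) [Field L] [CharP L p] (x : L)
    (rt : L → L) (hrt : ∀ a : L, rt a ^ p ^ υ = a) : AddMonoid.End (L → L) :=
{ toFun := fun u t => rt (u (x * t) - x * u t)
  map_zero' := by
    have hinj : Function.Injective fun a : L => a ^ p ^ υ := by
      intro a b hab
      exact (iterateFrobenius L p υ).injective
        (by simpa [iterateFrobenius_def] using hab)
    funext t
    apply hinj
    simp [hrt, zero_pow (pow_ne_zero υ (Nat.Prime.ne_zero Fact.out))]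
  map_add' := by
    have hinj : Function.Injective fun a : L => a ^ p ^ υ := by
      intro a b hab
      exact (iterateFrobenius L p υ).injective
        (by simpa [iterateFrobenius_def] using hab)
    intro u v; funext t
    apply hinj
    simp only [Pi.add_apply]
    rw [hrt, add_pow_char_pow, hrt, hrt]
    ring }

/-- The ring `𝒜` of `F_q`-linear polynomial differential operators: the subring of
`End(V)` generated by `τ`, `d` and the scalar operators `μ_λ`, `λ ∈ L`. -/
def opRingA (p υ : ℕ) [Fact p.Prime] (L : Type*) [Field L] [CharP L p] (x : L)
    (rt : L → L) (hrt : ∀ a : L, rt a ^ p ^ υ = a) :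
    Subring (AddMonoid.End (L → L)) :=
  Subring.closure (Set.range (muOp L) ∪ {tauOp p υ L, dOp p υ L x rt hrt})

set_option linter.unusedSectionVars false
set_option linter.unnecessarySimpa false
set_option maxHeartbeats 1000000

section Aux

variable (p υ : ℕ) [Fact p.Prime] (L : Type*) [Field L] [CharP L p]
  (x : L) (rt : L → L) (hrt : ∀ a : L, rt a ^ p ^ υ = a)

lemma endExt {M N : Type*} [AddCommMonoid (M → N)] {f g : AddMonoid.End (M → N)}
    (h : ∀ u t, f u t = g u t) : f = g :=
  AddMonoidHom.ext fun u => funext (h u)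

lemma powq_inj : Function.Injective fun a : L => a ^ p ^ υ := by
  intro a b hab
  exact (iterateFrobenius L p υ).injective (by simpa [iterateFrobenius_def] using hab)

variable {p υ L}

section rtLemmas
include hrt

lemma rt_q (a : L) : rt (a ^ p ^ υ) = a :=
  powq_inj p υ L (by simp only [hrt])

lemma rt_mul (a b : L) : rt (a * b) = rt a * rt b :=
  powq_inj p υ L (by simp only [mul_pow, hrt])

lemma rt_sub (a b : L) : rt (a - b) = rt a - rt b :=
  powq_inj p υ L (by simp only [sub_pow_char_pow, hrt])

lemma rt_add (a b : L) : rt (a + b) = rt a + rt b :=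
  powq_inj p υ L (by simp only [add_pow_char_pow, hrt])

lemma rt_zero : rt (0 : L) = 0 :=
  powq_inj p υ L (by simp only [hrt]; simp [zero_pow (pow_ne_zero υ (Nat.Prime.ne_zero Fact.out))])

end rtLemmas

-- basic muOp lemmas
@[simp] lemma muOp_apply (a : L) (u : L → L) (t : L) : muOp L a u t = a * u t := rfl
@[simp] lemma tauOp_apply (u : L → L) (t : L) : tauOp p υ L u t = u t ^ p ^ υ := rfl
@[simp] lemma dOp_apply (u : L → L) (t : L) :
    dOp p υ L x rt hrt u t = rt (u (x * t) - x * u t) := rfl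

lemma end_mul_apply (f g : AddMonoid.End (L → L)) (u : L → L) : (f * g) u = f (g u) := rfl

variable (L) in
lemma mu_mul (a b : L) : muOp L a * muOp L b = muOp L (a * b) :=
  endExt fun u t => by simp [end_mul_apply, mul_assoc]

variable (L) in
lemma mu_one : muOp L 1 = 1 := endExt fun u t => one_mul (u t)

variable (L) in
lemma mu_zero : muOp L 0 = 0 := endExt fun u t => zero_mul (u t)

variable (L) in
lemma mu_add (a b : L) : muOp L (a + b) = muOp L a + muOp L b :=
  endExt fun u t => by simp [add_mul]; rfl

variable (L) in
lemma mu_neg (a : L) : muOp L (-a) = - muOp L a :=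
  endExt fun u t => by simp; rfl

lemma tau_mu (a : L) : tauOp p υ L * muOp L a = muOp L (a ^ p ^ υ) * tauOp p υ L :=
  endExt fun u t => by simp [end_mul_apply, mul_pow]

include hrt in
lemma d_mu (a : L) :
    dOp p υ L x rt hrt * muOp L a = muOp L (rt a) * dOp p υ L x rt hrt :=
  endExt fun u t => by
    simp only [end_mul_apply, dOp_apply, muOp_apply]
    rw [show a * u (x * t) - x * (a * u t) = a * (u (x * t) - x * u t) by ring,
      rt_mul rt hrt]

include hrt in
lemma d_tau :
    dOp p υ L x rt hrt * tauOp p υ L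
      = tauOp p υ L * dOp p υ L x rt hrt + muOp L (x - rt x) :=
  endExt fun u t => by
    have hadd : ∀ f g : AddMonoid.End (L → L), ∀ u t, (f + g) u t = f u t + g u t :=
      fun f g u t => rfl
    rw [hadd]
    simp only [end_mul_apply, dOp_apply, tauOp_apply, muOp_apply]
    apply powq_inj p υ L
    simp only
    rw [hrt, add_pow_char_pow, hrt, sub_pow_char_pow, mul_pow, mul_pow,
      sub_pow_char_pow, hrt]
    ring
-- arithmetic helpers for q-th powers
lemma sub_powq (a b : L) (k : ℕ) :
    (a - b) ^ ((p ^ υ) ^ k) = a ^ ((p ^ υ) ^ k) - b ^ ((p ^ υ) ^ k) := by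
  rw [show (p ^ υ) ^ k = p ^ (υ * k) from (pow_mul p υ k).symm, sub_pow_char_pow]

lemma powq_powq (a : L) (i : ℕ) :
    (a ^ ((p ^ υ) ^ i)) ^ (p ^ υ) = a ^ ((p ^ υ) ^ (i + 1)) := by
  rw [← pow_mul, ← pow_succ]

include hrt in
lemma rtx_powq (a : L) (k : ℕ) :
    (rt a) ^ ((p ^ υ) ^ (k + 1)) = a ^ ((p ^ υ) ^ k) := by
  rw [pow_succ' (p ^ υ) k, pow_mul, hrt]

lemma tau_pow_mu (i : ℕ) (a : L) :
    (tauOp p υ L) ^ i * muOp L a = muOp L (a ^ (p ^ υ) ^ i) * (tauOp p υ L) ^ i := by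
  induction i generalizing a with
  | zero => simp [pow_zero, pow_one]
  | succ i ih =>
    calc (tauOp p υ L) ^ (i + 1) * muOp L a
        = (tauOp p υ L) ^ i * (tauOp p υ L * muOp L a) := by rw [pow_succ, mul_assoc]
      _ = ((tauOp p υ L) ^ i * muOp L (a ^ p ^ υ)) * tauOp p υ L := by
          rw [tau_mu, ← mul_assoc]
      _ = muOp L ((a ^ p ^ υ) ^ (p ^ υ) ^ i) * ((tauOp p υ L) ^ i * tauOp p υ L) := by
          rw [ih, mul_assoc]
      _ = muOp L (a ^ (p ^ υ) ^ (i + 1)) * (tauOp p υ L) ^ (i + 1) := by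
          rw [← pow_succ, ← pow_mul, ← pow_succ']

include hrt in
lemma d_pow_mu (j : ℕ) (a : L) :
    (dOp p υ L x rt hrt) ^ j * muOp L a
      = muOp L (rt^[j] a) * (dOp p υ L x rt hrt) ^ j := by
  induction j generalizing a with
  | zero => simp [pow_zero]
  | succ j ih =>
    calc (dOp p υ L x rt hrt) ^ (j + 1) * muOp L a
        = (dOp p υ L x rt hrt) ^ j * (dOp p υ L x rt hrt * muOp L a) := by
          rw [pow_succ, mul_assoc]
      _ = ((dOp p υ L x rt hrt) ^ j * muOp L (rt a)) * dOp p υ L x rt hrt := by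
          rw [d_mu x rt hrt, ← mul_assoc]
      _ = muOp L (rt^[j] (rt a)) * ((dOp p υ L x rt hrt) ^ j * dOp p υ L x rt hrt) := by
          rw [ih, mul_assoc]
      _ = muOp L (rt^[j + 1] a) * (dOp p υ L x rt hrt) ^ (j + 1) := by
          rw [← pow_succ, ← Function.iterate_succ_apply]

include hrt in
lemma d_tauPow (i : ℕ) :
    dOp p υ L x rt hrt * (tauOp p υ L) ^ (i + 1)
      = (tauOp p υ L) ^ (i + 1) * dOp p υ L x rt hrt
        + muOp L (x ^ (p ^ υ) ^ i - rt x) * (tauOp p υ L) ^ i := by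
  induction i with
  | zero => simpa [pow_one, pow_zero] using d_tau x rt hrt
  | succ i ih =>
    have key : (x - rt x) ^ (p ^ υ) ^ (i + 1) + (x ^ (p ^ υ) ^ i - rt x)
        = x ^ (p ^ υ) ^ (i + 1) - rt x := by
      rw [sub_powq, rtx_powq rt hrt x]
      ring
    calc dOp p υ L x rt hrt * (tauOp p υ L) ^ (i + 2)
        = (dOp p υ L x rt hrt * (tauOp p υ L) ^ (i + 1)) * tauOp p υ L := by
          rw [pow_succ, mul_assoc]
      _ = ((tauOp p υ L) ^ (i + 1) * dOp p υ L x rt hrt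
            + muOp L (x ^ (p ^ υ) ^ i - rt x) * (tauOp p υ L) ^ i) * tauOp p υ L := by
          rw [ih]
      _ = (tauOp p υ L) ^ (i + 1) * (dOp p υ L x rt hrt * tauOp p υ L)
            + muOp L (x ^ (p ^ υ) ^ i - rt x) * (tauOp p υ L) ^ (i + 1) := by
          rw [add_mul, mul_assoc, mul_assoc, ← pow_succ]
      _ = (tauOp p υ L) ^ (i + 1) * (tauOp p υ L * dOp p υ L x rt hrt)
            + ((tauOp p υ L) ^ (i + 1) * muOp L (x - rt x)
              + muOp L (x ^ (p ^ υ) ^ i - rt x) * (tauOp p υ L) ^ (i + 1)) := by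
          rw [d_tau x rt hrt, mul_add, add_assoc]
      _ = (tauOp p υ L) ^ (i + 2) * dOp p υ L x rt hrt
            + (muOp L ((x - rt x) ^ (p ^ υ) ^ (i + 1)) * (tauOp p υ L) ^ (i + 1)
              + muOp L (x ^ (p ^ υ) ^ i - rt x) * (tauOp p υ L) ^ (i + 1)) := by
          rw [tau_pow_mu, ← mul_assoc, ← pow_succ]
      _ = (tauOp p υ L) ^ (i + 2) * dOp p υ L x rt hrt
            + muOp L ((x - rt x) ^ (p ^ υ) ^ (i + 1) + (x ^ (p ^ υ) ^ i - rt x))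
              * (tauOp p υ L) ^ (i + 1) := by
          rw [mu_add, add_mul]
      _ = (tauOp p υ L) ^ (i + 2) * dOp p υ L x rt hrt
            + muOp L (x ^ (p ^ υ) ^ (i + 1) - rt x) * (tauOp p υ L) ^ (i + 1) := by
          rw [key]

include hrt in
lemma dPow_tau (j : ℕ) :
    (dOp p υ L x rt hrt) ^ (j + 1) * tauOp p υ L
      = tauOp p υ L * (dOp p υ L x rt hrt) ^ (j + 1)
        + muOp L (x - rt^[j + 1] x) * (dOp p υ L x rt hrt) ^ j := by
  induction j with
  | zero => simpa [pow_one, pow_zero] using d_tau x rt hrt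
  | succ j ih =>
    have key : (x - rt x) + rt (x - rt^[j + 1] x) = x - rt^[j + 2] x := by
      rw [rt_sub rt hrt, show rt (rt^[j+1] x) = rt^[j+2] x from
        (Function.iterate_succ_apply' rt (j+1) x).symm]
      ring
    calc (dOp p υ L x rt hrt) ^ (j + 2) * tauOp p υ L
        = dOp p υ L x rt hrt * ((dOp p υ L x rt hrt) ^ (j + 1) * tauOp p υ L) := by
          rw [pow_succ', mul_assoc]
      _ = dOp p υ L x rt hrt * (tauOp p υ L * (dOp p υ L x rt hrt) ^ (j + 1)
            + muOp L (x - rt^[j + 1] x) * (dOp p υ L x rt hrt) ^ j) := by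
          rw [ih]
      _ = (dOp p υ L x rt hrt * tauOp p υ L) * (dOp p υ L x rt hrt) ^ (j + 1)
            + (dOp p υ L x rt hrt * muOp L (x - rt^[j + 1] x))
              * (dOp p υ L x rt hrt) ^ j := by
          rw [mul_add, ← mul_assoc, ← mul_assoc]
      _ = (tauOp p υ L * dOp p υ L x rt hrt + muOp L (x - rt x))
              * (dOp p υ L x rt hrt) ^ (j + 1)
            + (muOp L (rt (x - rt^[j + 1] x)) * dOp p υ L x rt hrt)
              * (dOp p υ L x rt hrt) ^ j := by
          rw [d_tau x rt hrt, d_mu x rt hrt]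
      _ = tauOp p υ L * (dOp p υ L x rt hrt) ^ (j + 2)
            + (muOp L (x - rt x) * (dOp p υ L x rt hrt) ^ (j + 1)
              + muOp L (rt (x - rt^[j + 1] x)) * (dOp p υ L x rt hrt) ^ (j + 1)) := by
          rw [add_mul, mul_assoc, ← pow_succ', mul_assoc, ← pow_succ', add_assoc]
      _ = tauOp p υ L * (dOp p υ L x rt hrt) ^ (j + 2)
            + muOp L ((x - rt x) + rt (x - rt^[j + 1] x))
              * (dOp p υ L x rt hrt) ^ (j + 1) := by
          rw [mu_add, add_mul]
      _ = tauOp p υ L * (dOp p υ L x rt hrt) ^ (j + 2)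
            + muOp L (x - rt^[j + 2] x) * (dOp p υ L x rt hrt) ^ (j + 1) := by
          rw [key]

/-- The canonical double sum `Σ μ_{λ_{ij}} τ^i d^j`. -/
def bigSum (m n : ℕ) (lam : ℕ → ℕ → L) : AddMonoid.End (L → L) :=
  ∑ i ∈ Finset.range (m + 1), ∑ j ∈ Finset.range (n + 1),
    muOp L (lam i j) * (tauOp p υ L) ^ i * (dOp p υ L x rt hrt) ^ j

lemma bigSum_congr {m n : ℕ} {f g : ℕ → ℕ → L}
    (h : ∀ i ≤ m, ∀ j ≤ n, f i j = g i j) :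
    bigSum x rt hrt m n f = bigSum x rt hrt m n g := by
  unfold bigSum
  refine Finset.sum_congr rfl fun i hi => Finset.sum_congr rfl fun j hj => ?_
  rw [h i (Nat.lt_succ_iff.1 (Finset.mem_range.1 hi)) j
    (Nat.lt_succ_iff.1 (Finset.mem_range.1 hj))]

lemma bigSum_add (m n : ℕ) (f g : ℕ → ℕ → L) :
    bigSum x rt hrt m n (fun i j => f i j + g i j)
      = bigSum x rt hrt m n f + bigSum x rt hrt m n g := by
  unfold bigSum
  rw [← Finset.sum_add_distrib]
  refine Finset.sum_congr rfl fun i _ => ?_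
  rw [← Finset.sum_add_distrib]
  refine Finset.sum_congr rfl fun j _ => ?_
  rw [mu_add, add_mul, add_mul]

lemma bigSum_sub (m n : ℕ) (f g : ℕ → ℕ → L) :
    bigSum x rt hrt m n (fun i j => f i j - g i j)
      = bigSum x rt hrt m n f - bigSum x rt hrt m n g := by
  unfold bigSum
  rw [← Finset.sum_sub_distrib]
  refine Finset.sum_congr rfl fun i _ => ?_
  rw [← Finset.sum_sub_distrib]
  refine Finset.sum_congr rfl fun j _ => ?_
  have : muOp L (f i j - g i j) = muOp L (f i j) - muOp L (g i j) := by
    rw [sub_eq_add_neg, mu_add, mu_neg, ← sub_eq_add_neg]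
  rw [this, sub_mul, sub_mul]

lemma bigSum_zero (m n : ℕ) : bigSum x rt hrt m n (fun _ _ => (0 : L)) = 0 := by
  unfold bigSum
  simp [mu_zero]

-- termwise multiplication lemmas
lemma mu_mul_mono (c a : L) (i j : ℕ) :
    muOp L c * (muOp L a * (tauOp p υ L) ^ i * (dOp p υ L x rt hrt) ^ j)
      = muOp L (c * a) * (tauOp p υ L) ^ i * (dOp p υ L x rt hrt) ^ j := by
  rw [← mul_assoc, ← mul_assoc, mu_mul]

lemma T_mul_mono (a : L) (i j : ℕ) :
    tauOp p υ L * (muOp L a * (tauOp p υ L) ^ i * (dOp p υ L x rt hrt) ^ j)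
      = muOp L (a ^ p ^ υ) * (tauOp p υ L) ^ (i + 1) * (dOp p υ L x rt hrt) ^ j := by
  rw [← mul_assoc, ← mul_assoc, tau_mu, mul_assoc (muOp L _), ← pow_succ']

lemma mono_mul_d (a : L) (i j : ℕ) :
    muOp L a * (tauOp p υ L) ^ i * (dOp p υ L x rt hrt) ^ j * dOp p υ L x rt hrt
      = muOp L a * (tauOp p υ L) ^ i * (dOp p υ L x rt hrt) ^ (j + 1) := by
  rw [mul_assoc, ← pow_succ]

lemma mono_mul_mu (a c : L) (i j : ℕ) :
    muOp L a * (tauOp p υ L) ^ i * (dOp p υ L x rt hrt) ^ j * muOp L c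
      = muOp L (a * (rt^[j] c) ^ (p ^ υ) ^ i) * (tauOp p υ L) ^ i
          * (dOp p υ L x rt hrt) ^ j := by
  rw [mul_assoc, d_pow_mu x rt hrt, ← mul_assoc, mul_assoc (muOp L a), tau_pow_mu,
    ← mul_assoc, mu_mul]

lemma d_mul_mono (a : L) (i j : ℕ) :
    dOp p υ L x rt hrt * (muOp L a * (tauOp p υ L) ^ i * (dOp p υ L x rt hrt) ^ j)
      = muOp L (rt a) * (tauOp p υ L) ^ i * (dOp p υ L x rt hrt) ^ (j + 1)
        + (if 1 ≤ i then
            muOp L (rt a * (x ^ (p ^ υ) ^ (i - 1) - rt x)) * (tauOp p υ L) ^ (i - 1)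
              * (dOp p υ L x rt hrt) ^ j
          else 0) := by
  match i with
  | 0 =>
    simp only [pow_zero, mul_one, Nat.lt_irrefl, if_neg (by omega : ¬ 1 ≤ 0), add_zero]
    rw [← mul_assoc, d_mu, mul_assoc, ← pow_succ']
  | (k + 1) =>
    rw [if_pos (by omega : 1 ≤ k + 1), Nat.add_sub_cancel]
    rw [← mul_assoc, ← mul_assoc, d_mu, mul_assoc (muOp L (rt a)), d_tauPow x rt hrt k,
      mul_add, add_mul, mul_assoc (muOp L (rt a)) _ ((dOp p υ L x rt hrt) ^ j),
      mul_assoc ((tauOp p υ L) ^ (k+1)), ← pow_succ', ← mul_assoc,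
      ← mul_assoc (muOp L (rt a)) (muOp L _), mu_mul]

lemma mono_mul_T (a : L) (i j : ℕ) :
    muOp L a * (tauOp p υ L) ^ i * (dOp p υ L x rt hrt) ^ j * tauOp p υ L
      = muOp L a * (tauOp p υ L) ^ (i + 1) * (dOp p υ L x rt hrt) ^ j
        + (if 1 ≤ j then
            muOp L (a * (x - rt^[j] x) ^ (p ^ υ) ^ i) * (tauOp p υ L) ^ i
              * (dOp p υ L x rt hrt) ^ (j - 1)
          else 0) := by
  match j with
  | 0 =>
    simp only [pow_zero, mul_one, if_neg (by omega : ¬ 1 ≤ 0), add_zero]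
    rw [mul_assoc, ← pow_succ]
  | (k + 1) =>
    rw [if_pos (by omega : 1 ≤ k + 1), Nat.add_sub_cancel]
    rw [mul_assoc, dPow_tau x rt hrt k, mul_add]
    congr 1
    rw [← mul_assoc, mul_assoc (muOp L a), tau_pow_mu, ← mul_assoc (muOp L a), mu_mul]

lemma sum_shift0 (F : ℕ → AddMonoid.End (L → L)) (m : ℕ) (h0 : F 0 = 0) :
    ∑ i ∈ Finset.range (m + 1 + 1), F i = ∑ i ∈ Finset.range (m + 1), F (i + 1) := by
  rw [Finset.sum_range_succ' F (m + 1), h0, add_zero]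

lemma bigSum_pad {m n M N : ℕ} (hm : m ≤ M) (hn : n ≤ N) (lam : ℕ → ℕ → L) :
    bigSum x rt hrt m n lam
      = bigSum x rt hrt M N (fun i j => if i ≤ m ∧ j ≤ n then lam i j else 0) := by
  have h1 : bigSum x rt hrt m n lam
      = bigSum x rt hrt m n (fun i j => if i ≤ m ∧ j ≤ n then lam i j else 0) :=
    bigSum_congr x rt hrt fun i hi j hj => by rw [if_pos ⟨hi, hj⟩]
  rw [h1]
  unfold bigSum
  have inner : ∀ i, (∑ j ∈ Finset.range (n + 1),
        muOp L (if i ≤ m ∧ j ≤ n then lam i j else 0) * (tauOp p υ L) ^ i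
          * (dOp p υ L x rt hrt) ^ j)
      = ∑ j ∈ Finset.range (N + 1),
        muOp L (if i ≤ m ∧ j ≤ n then lam i j else 0) * (tauOp p υ L) ^ i
          * (dOp p υ L x rt hrt) ^ j := by
    intro i
    refine Finset.sum_subset (Finset.range_subset_range.2 (by omega)) fun j hjN hj => ?_
    rw [if_neg (fun hc => hj (Finset.mem_range.2 (by omega))), mu_zero, zero_mul, zero_mul]
  rw [Finset.sum_congr rfl fun i _ => inner i]
  refine Finset.sum_subset (Finset.range_subset_range.2 (by omega)) fun i hiM hi => ?_
  refine Finset.sum_eq_zero fun j hj => ?_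
  rw [if_neg (fun hc => hi (Finset.mem_range.2 (by omega))), mu_zero, zero_mul, zero_mul]

lemma mu_bigSum (c : L) (m n : ℕ) (lam : ℕ → ℕ → L) :
    muOp L c * bigSum x rt hrt m n lam
      = bigSum x rt hrt m n (fun i j => c * lam i j) := by
  unfold bigSum
  rw [Finset.mul_sum]
  refine Finset.sum_congr rfl fun i _ => ?_
  rw [Finset.mul_sum]
  exact Finset.sum_congr rfl fun j _ => mu_mul_mono x rt hrt c (lam i j) i j

lemma T_bigSum (m n : ℕ) (lam : ℕ → ℕ → L) :
    tauOp p υ L * bigSum x rt hrt m n lam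
      = bigSum x rt hrt (m + 1) n
          (fun i j => if 1 ≤ i then lam (i - 1) j ^ p ^ υ else 0) := by
  unfold bigSum
  rw [Finset.mul_sum, sum_shift0 _ _ (Finset.sum_eq_zero fun j _ => by
    beta_reduce
    rw [if_neg (by omega : ¬ 1 ≤ 0), mu_zero, zero_mul, zero_mul])]
  refine Finset.sum_congr rfl fun i _ => ?_
  rw [Finset.mul_sum]
  refine Finset.sum_congr rfl fun j _ => ?_
  beta_reduce
  rw [T_mul_mono x rt hrt, if_pos (by omega : 1 ≤ i + 1), Nat.add_sub_cancel]

lemma bigSum_mul_d (m n : ℕ) (lam : ℕ → ℕ → L) :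
    bigSum x rt hrt m n lam * dOp p υ L x rt hrt
      = bigSum x rt hrt m (n + 1) (fun i j => if 1 ≤ j then lam i (j - 1) else 0) := by
  unfold bigSum
  rw [Finset.sum_mul]
  refine Finset.sum_congr rfl fun i _ => ?_
  rw [Finset.sum_mul, sum_shift0 _ _ (by
    beta_reduce
    rw [if_neg (by omega : ¬ 1 ≤ 0), mu_zero, zero_mul, zero_mul])]
  refine Finset.sum_congr rfl fun j _ => ?_
  beta_reduce
  rw [mono_mul_d, if_pos (by omega : 1 ≤ j + 1), Nat.add_sub_cancel]

lemma bigSum_mul_mu (m n : ℕ) (lam : ℕ → ℕ → L) (c : L) :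
    bigSum x rt hrt m n lam * muOp L c
      = bigSum x rt hrt m n (fun i j => lam i j * (rt^[j] c) ^ (p ^ υ) ^ i) := by
  unfold bigSum
  rw [Finset.sum_mul]
  refine Finset.sum_congr rfl fun i _ => ?_
  rw [Finset.sum_mul]
  exact Finset.sum_congr rfl fun j _ => mono_mul_mu x rt hrt (lam i j) c i j

lemma d_bigSum (m n : ℕ) (lam : ℕ → ℕ → L) :
    dOp p υ L x rt hrt * bigSum x rt hrt m n lam
      = bigSum x rt hrt m (n + 1) (fun i j => if 1 ≤ j then rt (lam i (j - 1)) else 0)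
        + bigSum x rt hrt m n (fun i j =>
            if i + 1 ≤ m then rt (lam (i + 1) j) * (x ^ (p ^ υ) ^ i - rt x) else 0) := by
  unfold bigSum
  rw [Finset.mul_sum]
  have expand : ∀ i ∈ Finset.range (m + 1),
      (dOp p υ L x rt hrt * ∑ j ∈ Finset.range (n + 1),
        muOp L (lam i j) * (tauOp p υ L) ^ i * (dOp p υ L x rt hrt) ^ j)
      = (∑ j ∈ Finset.range (n + 1),
          muOp L (rt (lam i j)) * (tauOp p υ L) ^ i * (dOp p υ L x rt hrt) ^ (j + 1))
        + (∑ j ∈ Finset.range (n + 1), if 1 ≤ i then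
            muOp L (rt (lam i j) * (x ^ (p ^ υ) ^ (i - 1) - rt x)) * (tauOp p υ L) ^ (i - 1)
              * (dOp p υ L x rt hrt) ^ j
          else 0) := by
    intro i _
    rw [Finset.mul_sum, ← Finset.sum_add_distrib]
    exact Finset.sum_congr rfl fun j _ => d_mul_mono x rt hrt (lam i j) i j
  rw [Finset.sum_congr rfl expand, Finset.sum_add_distrib]
  congr 1
  · -- first piece
    refine Finset.sum_congr rfl fun i _ => ?_
    rw [sum_shift0 _ _ (by
      beta_reduce
      rw [if_neg (by omega : ¬ 1 ≤ 0), mu_zero, zero_mul, zero_mul])]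
    refine Finset.sum_congr rfl fun j _ => ?_
    beta_reduce
    rw [if_pos (by omega : 1 ≤ j + 1), Nat.add_sub_cancel]
  · -- second piece
    conv_lhs => rw [Finset.sum_range_succ' _ m]
    conv_rhs => rw [Finset.sum_range_succ]
    congr 1
    · refine Finset.sum_congr rfl fun i hi => ?_
      have him : i + 1 ≤ m := Finset.mem_range.1 hi
      refine Finset.sum_congr rfl fun j _ => ?_
      beta_reduce
      rw [if_pos (by omega : 1 ≤ i + 1), if_pos him, Nat.add_sub_cancel]
    · refine Finset.sum_congr rfl fun j _ => ?_
      beta_reduce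
      rw [if_neg (by omega : ¬ 1 ≤ 0), if_neg (by omega : ¬ m + 1 ≤ m), mu_zero,
        zero_mul, zero_mul]

lemma bigSum_mul_T (m n : ℕ) (lam : ℕ → ℕ → L) :
    bigSum x rt hrt m n lam * tauOp p υ L
      = bigSum x rt hrt (m + 1) n (fun i j => if 1 ≤ i then lam (i - 1) j else 0)
        + bigSum x rt hrt m n (fun i j =>
            if j + 1 ≤ n then lam i (j + 1) * (x - rt^[j + 1] x) ^ (p ^ υ) ^ i else 0) := by
  unfold bigSum
  rw [Finset.sum_mul]
  have expand : ∀ i ∈ Finset.range (m + 1),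
      ((∑ j ∈ Finset.range (n + 1),
        muOp L (lam i j) * (tauOp p υ L) ^ i * (dOp p υ L x rt hrt) ^ j) * tauOp p υ L)
      = (∑ j ∈ Finset.range (n + 1),
          muOp L (lam i j) * (tauOp p υ L) ^ (i + 1) * (dOp p υ L x rt hrt) ^ j)
        + (∑ j ∈ Finset.range (n + 1), if 1 ≤ j then
            muOp L (lam i j * (x - rt^[j] x) ^ (p ^ υ) ^ i) * (tauOp p υ L) ^ i
              * (dOp p υ L x rt hrt) ^ (j - 1)
          else 0) := by
    intro i _
    rw [Finset.sum_mul, ← Finset.sum_add_distrib]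
    exact Finset.sum_congr rfl fun j _ => mono_mul_T x rt hrt (lam i j) i j
  rw [Finset.sum_congr rfl expand, Finset.sum_add_distrib]
  congr 1
  · rw [sum_shift0 _ _ (Finset.sum_eq_zero fun j _ => by
      beta_reduce
      rw [if_neg (by omega : ¬ 1 ≤ 0), mu_zero, zero_mul, zero_mul])]
    refine Finset.sum_congr rfl fun i _ => ?_
    refine Finset.sum_congr rfl fun j _ => ?_
    beta_reduce
    rw [if_pos (by omega : 1 ≤ i + 1), Nat.add_sub_cancel]
  · refine Finset.sum_congr rfl fun i _ => ?_
    conv_lhs => rw [Finset.sum_range_succ' _ n]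
    conv_rhs => rw [Finset.sum_range_succ]
    congr 1
    · refine Finset.sum_congr rfl fun j hj => ?_
      have hjn : j + 1 ≤ n := Finset.mem_range.1 hj
      beta_reduce
      rw [if_pos (by omega : 1 ≤ j + 1), if_pos hjn, Nat.add_sub_cancel]
    · beta_reduce
      rw [if_neg (by omega : ¬ 1 ≤ 0), if_neg (by omega : ¬ n + 1 ≤ n), mu_zero,
        zero_mul, zero_mul]

lemma mu_mem (a : L) : muOp L a ∈ opRingA p υ L x rt hrt :=
  Subring.subset_closure (Or.inl ⟨a, rfl⟩)

lemma tau_mem : tauOp p υ L ∈ opRingA p υ L x rt hrt :=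
  Subring.subset_closure (Or.inr (Set.mem_insert _ _))

lemma d_mem : dOp p υ L x rt hrt ∈ opRingA p υ L x rt hrt :=
  Subring.subset_closure (Or.inr (Set.mem_insert_of_mem _ rfl))

lemma bigSum_neg (m n : ℕ) (lam : ℕ → ℕ → L) :
    bigSum x rt hrt m n (fun i j => - lam i j) = - bigSum x rt hrt m n lam := by
  unfold bigSum
  rw [← Finset.sum_neg_distrib]
  refine Finset.sum_congr rfl fun i _ => ?_
  rw [← Finset.sum_neg_distrib]
  refine Finset.sum_congr rfl fun j _ => ?_
  beta_reduce
  rw [mu_neg, neg_mul (muOp L (lam i j)) ((tauOp p υ L) ^ i), neg_mul]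

lemma exists_rep {a : AddMonoid.End (L → L)} (ha : a ∈ opRingA p υ L x rt hrt) :
    ∃ m n lam, a = bigSum x rt hrt m n lam := by
  have repAdd : ∀ u v : AddMonoid.End (L → L),
      (∃ m n lam, u = bigSum x rt hrt m n lam) →
      (∃ m n lam, v = bigSum x rt hrt m n lam) →
      (∃ m n lam, u + v = bigSum x rt hrt m n lam) := by
    rintro u v ⟨m, n, f, rfl⟩ ⟨m', n', g, rfl⟩
    refine ⟨max m m', max n n', fun i j =>
      (if i ≤ m ∧ j ≤ n then f i j else 0) + (if i ≤ m' ∧ j ≤ n' then g i j else 0), ?_⟩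
    rw [bigSum_add, ← bigSum_pad x rt hrt (le_max_left m m') (le_max_left n n'),
      ← bigSum_pad x rt hrt (le_max_right m m') (le_max_right n n')]
  induction ha using Subring.closure_induction with
  | mem g hg =>
    rcases hg with ⟨c, rfl⟩ | hg
    · exact ⟨0, 0, fun _ _ => c, by unfold bigSum; simp⟩
    · rcases hg with rfl | rfl
      · refine ⟨1, 0, fun i _ => if i = 1 then 1 else 0, ?_⟩
        unfold bigSum
        simp [Finset.sum_range_succ, mu_zero, mu_one]
      · refine ⟨0, 1, fun _ j => if j = 1 then 1 else 0, ?_⟩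
        unfold bigSum
        simp [Finset.sum_range_succ, mu_zero, mu_one]
  | zero => exact ⟨0, 0, fun _ _ => 0, (bigSum_zero x rt hrt 0 0).symm⟩
  | one => exact ⟨0, 0, fun _ _ => 1, by unfold bigSum; simp [mu_one]⟩
  | add u v hu hv ihu ihv => exact repAdd u v ihu ihv
  | neg u hu ihu =>
    obtain ⟨m, n, f, rfl⟩ := ihu
    exact ⟨m, n, fun i j => - f i j, (bigSum_neg x rt hrt m n f).symm⟩
  | mul u v hu hv ihu ihv =>
    obtain ⟨m', n', g, rfl⟩ := ihv
    -- closure under right multiplications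
    have hmulMu : ∀ (w : AddMonoid.End (L → L)) (c : L),
        (∃ m n lam, w = bigSum x rt hrt m n lam) →
        (∃ m n lam, w * muOp L c = bigSum x rt hrt m n lam) := by
      rintro w c ⟨m, n, f, rfl⟩
      exact ⟨m, n, _, bigSum_mul_mu x rt hrt m n f c⟩
    have hmulT : ∀ (w : AddMonoid.End (L → L)),
        (∃ m n lam, w = bigSum x rt hrt m n lam) →
        (∃ m n lam, w * tauOp p υ L = bigSum x rt hrt m n lam) := by
      rintro w ⟨m, n, f, rfl⟩
      refine ⟨m + 1, n, fun i j =>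
        (if 1 ≤ i then f (i - 1) j else 0)
          + (if i ≤ m ∧ j ≤ n then
              (if j + 1 ≤ n then f i (j + 1) * (x - rt^[j + 1] x) ^ (p ^ υ) ^ i else 0)
             else 0), ?_⟩
      rw [bigSum_add, bigSum_mul_T,
        bigSum_pad x rt hrt (show m ≤ m + 1 by omega) (le_refl n)
          (fun i j => if j + 1 ≤ n then f i (j + 1) * (x - rt^[j + 1] x) ^ (p ^ υ) ^ i
            else 0)]
    have hmulD : ∀ (w : AddMonoid.End (L → L)),
        (∃ m n lam, w = bigSum x rt hrt m n lam) →
        (∃ m n lam, w * dOp p υ L x rt hrt = bigSum x rt hrt m n lam) := by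
      rintro w ⟨m, n, f, rfl⟩
      exact ⟨m, n + 1, _, bigSum_mul_d x rt hrt m n f⟩
    have hmulTpow : ∀ (k : ℕ) (w : AddMonoid.End (L → L)),
        (∃ m n lam, w = bigSum x rt hrt m n lam) →
        (∃ m n lam, w * (tauOp p υ L) ^ k = bigSum x rt hrt m n lam) := by
      intro k
      induction k with
      | zero => intro w hw; rw [pow_zero]; simpa [mul_one] using hw
      | succ k ih =>
        intro w hw
        have h1 := ih w hw
        have h2 := hmulT _ h1
        rwa [mul_assoc, ← pow_succ] at h2
    have hmulDpow : ∀ (k : ℕ) (w : AddMonoid.End (L → L)),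
        (∃ m n lam, w = bigSum x rt hrt m n lam) →
        (∃ m n lam, w * (dOp p υ L x rt hrt) ^ k = bigSum x rt hrt m n lam) := by
      intro k
      induction k with
      | zero => intro w hw; rw [pow_zero]; simpa [mul_one] using hw
      | succ k ih =>
        intro w hw
        have h1 := ih w hw
        have h2 := hmulD _ h1
        rwa [mul_assoc, ← pow_succ] at h2
    -- now expand the product
    have expand : u * bigSum x rt hrt m' n' g
        = ∑ i ∈ Finset.range (m' + 1), ∑ j ∈ Finset.range (n' + 1),
            ((u * muOp L (g i j)) * (tauOp p υ L) ^ i) * (dOp p υ L x rt hrt) ^ j := by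
      unfold bigSum
      rw [Finset.mul_sum]
      refine Finset.sum_congr rfl fun i _ => ?_
      rw [Finset.mul_sum]
      refine Finset.sum_congr rfl fun j _ => ?_
      rw [← mul_assoc, ← mul_assoc]
    rw [expand]
    refine Finset.sum_induction _ _ repAdd ⟨0, 0, fun _ _ => 0,
      (bigSum_zero x rt hrt 0 0).symm⟩ (fun i _ => ?_)
    refine Finset.sum_induction _ _ repAdd ⟨0, 0, fun _ _ => 0,
      (bigSum_zero x rt hrt 0 0).symm⟩ (fun j _ => ?_)
    exact hmulDpow j _ (hmulTpow i _ (hmulMu u (g i j) ihu))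

-- frobenius iterated injectivity
lemma frob_iter_inj (k : ℕ) {u v : L} (h : u ^ (p ^ υ) ^ k = v ^ (p ^ υ) ^ k) : u = v := by
  induction k with
  | zero => simpa using h
  | succ k ih =>
    rw [← powq_powq, ← powq_powq] at h
    exact ih (powq_inj p υ L h)

section trans
variable [Algebra (ZMod p) L] (hx : Transcendental (ZMod p) x) (hυ : 1 ≤ υ)
include hx hυ

lemma x_pow_q_ne (k : ℕ) (hk : 1 ≤ k) : x ^ (p ^ υ) ^ k ≠ x := by
  intro h
  apply hx
  have hp2 : 2 ≤ p := (Fact.out : p.Prime).two_le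
  have hN : 2 ≤ (p ^ υ) ^ k := by
    calc 2 ≤ p := hp2
    _ ≤ p ^ υ := Nat.le_self_pow (by omega) p
    _ = (p ^ υ) ^ 1 := (pow_one _).symm
    _ ≤ (p ^ υ) ^ k := Nat.pow_le_pow_right (by positivity) hk
  refine ⟨Polynomial.X ^ ((p ^ υ) ^ k) - Polynomial.X, ?_, ?_⟩
  · intro h0
    have := congrArg Polynomial.natDegree (sub_eq_zero.1 h0)
    rw [Polynomial.natDegree_X_pow, Polynomial.natDegree_X] at this
    omega
  · simp [h]

lemma x_pow_q_inj {a b : ℕ} (h : x ^ (p ^ υ) ^ a = x ^ (p ^ υ) ^ b) : a = b := by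
  rcases Nat.lt_trichotomy a b with hab | hab | hab
  · exfalso
    have key : (x ^ (p ^ υ) ^ (b - a)) ^ (p ^ υ) ^ a = x ^ (p ^ υ) ^ b := by
      rw [← pow_mul x, ← pow_add (p ^ υ), Nat.sub_add_cancel (le_of_lt hab)]
    rw [← key] at h
    have hxx : x = x ^ (p ^ υ) ^ (b - a) := frob_iter_inj a h
    exact x_pow_q_ne x hx hυ (b - a) (by omega) hxx.symm
  · exact hab
  · exfalso
    have key : (x ^ (p ^ υ) ^ (a - b)) ^ (p ^ υ) ^ b = x ^ (p ^ υ) ^ a := by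
      rw [← pow_mul x, ← pow_add (p ^ υ), Nat.sub_add_cancel (le_of_lt hab)]
    rw [← key] at h
    have hxx : x = x ^ (p ^ υ) ^ (a - b) := frob_iter_inj b h.symm
    exact x_pow_q_ne x hx hυ (a - b) (by omega) hxx.symm

end trans

include hrt in
lemma rt_iter_pow (a : L) (k : ℕ) : (rt^[k] a) ^ (p ^ υ) ^ k = a := by
  induction k generalizing a with
  | zero => simpa using rfl
  | succ k ih =>
    rw [← powq_powq, Function.iterate_succ_apply, ih (rt a), hrt]

section trans2
variable [Algebra (ZMod p) L] (hx : Transcendental (ZMod p) x) (hυ : 1 ≤ υ)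
include hx hυ hrt

lemma rt_iter_ne {a b : ℕ} (hab : a ≠ b) : rt^[a] x ≠ rt^[b] x := by
  intro h
  have h2 := congrArg (fun u : L => u ^ (p ^ υ) ^ (a + b)) h
  have ea : (rt^[a] x) ^ (p ^ υ) ^ (a + b) = x ^ (p ^ υ) ^ b := by
    rw [pow_add, pow_mul, rt_iter_pow rt hrt x]
  have eb : (rt^[b] x) ^ (p ^ υ) ^ (a + b) = x ^ (p ^ υ) ^ a := by
    rw [add_comm a b, pow_add, pow_mul, rt_iter_pow rt hrt x]
  rw [ea, eb] at h2
  exact hab (x_pow_q_inj x hx hυ h2).symm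

end trans2

section MainMachinery

variable (D : Set (AddMonoid.End (L → L)))
variable (hDadd : ∀ a ∈ D, ∀ b ∈ D, a + b ∈ D)
variable (hDneg : ∀ a ∈ D, -a ∈ D)
variable (hDleft : ∀ a ∈ opRingA p υ L x rt hrt, ∀ s ∈ D, a * s ∈ D)
variable (hDright : ∀ a ∈ opRingA p υ L x rt hrt, ∀ s ∈ D, s * a ∈ D)
variable (hP : ∀ (m n : ℕ) (lam : ℕ → ℕ → L), bigSum x rt hrt m n lam ∈ D →
  bigSum x rt hrt m n (fun i j => lam i j ^ p ^ υ) ∈ D)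

lemma ite_powq (c : Prop) [Decidable c] (a : L) :
    (if c then a else 0) ^ p ^ υ = if c then a ^ p ^ υ else 0 := by
  split_ifs
  · rfl
  · exact zero_pow (pow_ne_zero υ (Nat.Prime.ne_zero Fact.out))

include hrt in
lemma heps (i : ℕ) : (x ^ (p ^ υ) ^ i - rt x) ^ p ^ υ = x ^ (p ^ υ) ^ (i + 1) - x := by
  rw [sub_pow_char_pow, powq_powq, hrt]

lemma row_eq1 (m n : ℕ) (lam : ℕ → ℕ → L) :
    dOp p υ L x rt hrt * bigSum x rt hrt m n lam
      = bigSum x rt hrt m (n + 1) (fun i j =>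
          (if 1 ≤ j then rt (lam i (j - 1)) else 0)
            + (if i + 1 ≤ m ∧ j ≤ n then rt (lam (i + 1) j) * (x ^ (p ^ υ) ^ i - rt x)
               else 0)) := by
  rw [d_bigSum, bigSum_pad x rt hrt (le_refl m) (Nat.le_succ n)
      (fun i j => if i + 1 ≤ m then rt (lam (i + 1) j) * (x ^ (p ^ υ) ^ i - rt x) else 0),
    ← bigSum_add]
  refine bigSum_congr x rt hrt fun i hi j hj => ?_
  congr 1
  split_ifs <;> first | rfl | omega

include hDadd hDneg hDleft hDright hP in
lemma rowD (m n : ℕ) (lam : ℕ → ℕ → L) (hu : bigSum x rt hrt m n lam ∈ D) :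
    bigSum x rt hrt m n (fun i j => (lam i j * (x ^ (p ^ υ) ^ i - x)) ^ p ^ υ) ∈ D := by
  have h1 : bigSum x rt hrt m (n + 1) (fun i j =>
      (if 1 ≤ j then rt (lam i (j - 1)) else 0)
        + (if i + 1 ≤ m ∧ j ≤ n then rt (lam (i + 1) j) * (x ^ (p ^ υ) ^ i - rt x)
           else 0)) ∈ D := by
    rw [← row_eq1 x rt hrt]
    exact hDleft _ (d_mem x rt hrt) _ hu
  have h2 := hP m (n + 1) _ h1
  have h3 : bigSum x rt hrt m n lam * dOp p υ L x rt hrt ∈ D :=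
    hDright _ (d_mem x rt hrt) _ hu
  have h4 := hDadd _ h2 _ (hDneg _ h3)
  have eq2 : bigSum x rt hrt m (n + 1) (fun i j =>
        ((if 1 ≤ j then rt (lam i (j - 1)) else 0)
          + (if i + 1 ≤ m ∧ j ≤ n then rt (lam (i + 1) j) * (x ^ (p ^ υ) ^ i - rt x)
             else 0)) ^ p ^ υ)
      + -(bigSum x rt hrt m n lam * dOp p υ L x rt hrt)
      = bigSum x rt hrt m (n + 1) (fun i j =>
          if i + 1 ≤ m ∧ j ≤ n then lam (i + 1) j * (x ^ (p ^ υ) ^ (i + 1) - x) else 0) := by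
    rw [bigSum_mul_d, ← sub_eq_add_neg, ← bigSum_sub]
    refine bigSum_congr x rt hrt fun i hi j hj => ?_
    rw [add_pow_char_pow, ite_powq, ite_powq, hrt, mul_pow, hrt, heps x rt hrt,
      add_sub_cancel_left]
  rw [eq2] at h4
  have h5 := hDleft _ (tau_mem x rt hrt) _ h4
  have eq3 : tauOp p υ L * bigSum x rt hrt m (n + 1) (fun i j =>
        if i + 1 ≤ m ∧ j ≤ n then lam (i + 1) j * (x ^ (p ^ υ) ^ (i + 1) - x) else 0)
      = bigSum x rt hrt m n (fun i j => (lam i j * (x ^ (p ^ υ) ^ i - x)) ^ p ^ υ) := by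
    rw [T_bigSum, bigSum_pad x rt hrt (Nat.le_succ m) (Nat.le_succ n)
      (fun i j => (lam i j * (x ^ (p ^ υ) ^ i - x)) ^ p ^ υ)]
    refine (bigSum_congr x rt hrt fun i hi j hj => ?_).symm
    match i with
    | 0 =>
      rw [if_neg (by omega : ¬ 1 ≤ 0)]
      split_ifs
      · rw [pow_zero, pow_one, sub_self, mul_zero,
          zero_pow (pow_ne_zero υ (Nat.Prime.ne_zero Fact.out))]
      · rfl
    | (k + 1) =>
      rw [if_pos (by omega : 1 ≤ k + 1), Nat.add_sub_cancel, ite_powq]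
  rw [eq3] at h5
  exact h5

include hrt hDadd hDneg hDleft hDright hP in
lemma killRowD (m n n0 : ℕ) (lam : ℕ → ℕ → L) (hu : bigSum x rt hrt m n lam ∈ D) :
    bigSum x rt hrt m n (fun i j => lam i j ^ p ^ υ
      * ((x ^ (p ^ υ) ^ n0 - x) ^ p ^ υ - (x ^ (p ^ υ) ^ i - x) ^ p ^ υ)) ∈ D := by
  have h2 := hP m n lam hu
  have h3 := hDleft _ (mu_mem x rt hrt ((x ^ (p ^ υ) ^ n0 - x) ^ p ^ υ)) _ h2
  have h4 := rowD x rt hrt D hDadd hDneg hDleft hDright hP m n lam hu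
  have h5 := hDadd _ h3 _ (hDneg _ h4)
  have eq : muOp L ((x ^ (p ^ υ) ^ n0 - x) ^ p ^ υ)
        * bigSum x rt hrt m n (fun i j => lam i j ^ p ^ υ)
      + -(bigSum x rt hrt m n (fun i j => (lam i j * (x ^ (p ^ υ) ^ i - x)) ^ p ^ υ))
      = bigSum x rt hrt m n (fun i j => lam i j ^ p ^ υ
          * ((x ^ (p ^ υ) ^ n0 - x) ^ p ^ υ - (x ^ (p ^ υ) ^ i - x) ^ p ^ υ)) := by
    rw [mu_bigSum, ← sub_eq_add_neg, ← bigSum_sub]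
    refine bigSum_congr x rt hrt fun i hi j hj => ?_
    rw [mul_pow]
    ring
  rwa [eq] at h5

lemma col_eq1 (m n : ℕ) (lam : ℕ → ℕ → L) :
    bigSum x rt hrt m n lam * tauOp p υ L
      = bigSum x rt hrt (m + 1) n (fun i j =>
          (if 1 ≤ i then lam (i - 1) j else 0)
            + (if i ≤ m ∧ j + 1 ≤ n then lam i (j + 1) * (x - rt^[j + 1] x) ^ (p ^ υ) ^ i
               else 0)) := by
  rw [bigSum_mul_T, bigSum_pad x rt hrt (Nat.le_succ m) (le_refl n)
      (fun i j => if j + 1 ≤ n then lam i (j + 1) * (x - rt^[j + 1] x) ^ (p ^ υ) ^ i else 0),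
    ← bigSum_add]
  refine bigSum_congr x rt hrt fun i hi j hj => ?_
  congr 1
  split_ifs <;> first | rfl | omega

include hDadd hDneg hDleft hDright hP in
lemma colD (m n : ℕ) (lam : ℕ → ℕ → L) (hu : bigSum x rt hrt m n lam ∈ D) :
    bigSum x rt hrt m n (fun i j =>
      lam i j ^ p ^ υ * (x - rt^[j] x) ^ (p ^ υ) ^ (i + 1)) ∈ D := by
  have h1 : bigSum x rt hrt (m + 1) n (fun i j =>
      (if 1 ≤ i then lam (i - 1) j else 0)
        + (if i ≤ m ∧ j + 1 ≤ n then lam i (j + 1) * (x - rt^[j + 1] x) ^ (p ^ υ) ^ i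
           else 0)) ∈ D := by
    rw [← col_eq1 x rt hrt]
    exact hDright _ (tau_mem x rt hrt) _ hu
  have h2 := hP (m + 1) n _ h1
  have h3 := hDleft _ (tau_mem x rt hrt) _ hu
  have h4 := hDadd _ h2 _ (hDneg _ h3)
  have eq2 : bigSum x rt hrt (m + 1) n (fun i j =>
        ((if 1 ≤ i then lam (i - 1) j else 0)
          + (if i ≤ m ∧ j + 1 ≤ n then lam i (j + 1) * (x - rt^[j + 1] x) ^ (p ^ υ) ^ i
             else 0)) ^ p ^ υ)
      + -(tauOp p υ L * bigSum x rt hrt m n lam)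
      = bigSum x rt hrt (m + 1) n (fun i j =>
          if i ≤ m ∧ j + 1 ≤ n then
            lam i (j + 1) ^ p ^ υ * (x - rt^[j + 1] x) ^ (p ^ υ) ^ (i + 1)
          else 0) := by
    rw [T_bigSum, ← sub_eq_add_neg, ← bigSum_sub]
    refine bigSum_congr x rt hrt fun i hi j hj => ?_
    rw [add_pow_char_pow, ite_powq, ite_powq, mul_pow, powq_powq, add_sub_cancel_left]
  rw [eq2] at h4
  have h5 := hDright _ (d_mem x rt hrt) _ h4
  have eq3 : bigSum x rt hrt (m + 1) n (fun i j =>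
        if i ≤ m ∧ j + 1 ≤ n then
          lam i (j + 1) ^ p ^ υ * (x - rt^[j + 1] x) ^ (p ^ υ) ^ (i + 1)
        else 0) * dOp p υ L x rt hrt
      = bigSum x rt hrt m n (fun i j =>
          lam i j ^ p ^ υ * (x - rt^[j] x) ^ (p ^ υ) ^ (i + 1)) := by
    rw [bigSum_mul_d, bigSum_pad x rt hrt (Nat.le_succ m) (Nat.le_succ n)
      (fun i j => lam i j ^ p ^ υ * (x - rt^[j] x) ^ (p ^ υ) ^ (i + 1))]
    refine bigSum_congr x rt hrt fun i hi j hj => ?_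
    match j with
    | 0 =>
      rw [if_neg (by omega : ¬ 1 ≤ 0)]
      split_ifs
      · rw [Function.iterate_zero_apply, sub_self,
          zero_pow (pow_ne_zero _ (pow_ne_zero _ (Nat.Prime.ne_zero Fact.out))), mul_zero]
      · rfl
    | (k + 1) =>
      rw [if_pos (by omega : 1 ≤ k + 1), Nat.add_sub_cancel]
  rw [eq3] at h5
  exact h5

include hrt hDadd hDneg hDleft hDright hP in
lemma killColD (m n i0 n0 : ℕ) (lam : ℕ → ℕ → L) (hu : bigSum x rt hrt m n lam ∈ D) :
    bigSum x rt hrt m n (fun i j => lam i j ^ p ^ υ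
      * ((x - rt^[n0] x) ^ (p ^ υ) ^ (i0 + 1) - (x - rt^[j] x) ^ (p ^ υ) ^ (i + 1))) ∈ D := by
  have h2 := hP m n lam hu
  have h3 := hDleft _ (mu_mem x rt hrt ((x - rt^[n0] x) ^ (p ^ υ) ^ (i0 + 1))) _ h2
  have h4 := colD x rt hrt D hDadd hDneg hDleft hDright hP m n lam hu
  have h5 := hDadd _ h3 _ (hDneg _ h4)
  have eq : muOp L ((x - rt^[n0] x) ^ (p ^ υ) ^ (i0 + 1))
        * bigSum x rt hrt m n (fun i j => lam i j ^ p ^ υ)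
      + -(bigSum x rt hrt m n (fun i j =>
          lam i j ^ p ^ υ * (x - rt^[j] x) ^ (p ^ υ) ^ (i + 1)))
      = bigSum x rt hrt m n (fun i j => lam i j ^ p ^ υ
          * ((x - rt^[n0] x) ^ (p ^ υ) ^ (i0 + 1) - (x - rt^[j] x) ^ (p ^ υ) ^ (i + 1))) := by
    rw [mu_bigSum, ← sub_eq_add_neg, ← bigSum_sub]
    refine bigSum_congr x rt hrt fun i hi j hj => ?_
    ring
  rwa [eq] at h5

end MainMachinery

/-- Iterated row-kill coefficient transformation. -/
def rowF (Q : ℕ) (y : L) (lam : ℕ → ℕ → L) : List ℕ → ℕ → ℕ → L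
  | [] => lam
  | k :: ks => fun i j =>
      rowF Q y lam ks i j ^ Q * ((y ^ Q ^ k - y) ^ Q - (y ^ Q ^ i - y) ^ Q)

/-- Iterated column-kill coefficient transformation. -/
def colF (Q i0 : ℕ) (y : L) (rt' : L → L) (lam : ℕ → ℕ → L) : List ℕ → ℕ → ℕ → L
  | [] => lam
  | k :: ks => fun i j =>
      colF Q i0 y rt' lam ks i j ^ Q
        * ((y - rt'^[k] y) ^ Q ^ (i0 + 1) - (y - rt'^[j] y) ^ Q ^ (i + 1))

lemma rowF_zero {Q : ℕ} (hQ : Q ≠ 0) (y : L) (lam : ℕ → ℕ → L) (ks : List ℕ)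
    {i : ℕ} (hi : i ∈ ks) (j : ℕ) : rowF Q y lam ks i j = 0 := by
  induction ks with
  | nil => cases hi
  | cons k ks ih =>
    rcases List.mem_cons.1 hi with rfl | hi'
    · simp [rowF]
    · simp [rowF, ih hi', zero_pow hQ]

lemma rowF_ne {Q : ℕ} (y : L) (lam : ℕ → ℕ → L) (ks : List ℕ) {i0 j0 : ℕ}
    (h0 : lam i0 j0 ≠ 0)
    (hks : ∀ k ∈ ks, (y ^ Q ^ k - y) ^ Q ≠ (y ^ Q ^ i0 - y) ^ Q) :
    rowF Q y lam ks i0 j0 ≠ 0 := by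
  induction ks with
  | nil => exact h0
  | cons k ks ih =>
    have h1 := ih fun k' hk' => hks k' (List.mem_cons_of_mem _ hk')
    exact mul_ne_zero (pow_ne_zero _ h1)
      (sub_ne_zero_of_ne (hks k List.mem_cons_self))

lemma colF_zero_of {Q i0 : ℕ} (hQ : Q ≠ 0) (y : L) (rt' : L → L) (lam : ℕ → ℕ → L)
    (ks : List ℕ) {i j : ℕ} (h : lam i j = 0) : colF Q i0 y rt' lam ks i j = 0 := by
  induction ks with
  | nil => exact h
  | cons k ks ih => simp [colF, ih, zero_pow hQ]

lemma colF_zero_col {Q i0 : ℕ} (hQ : Q ≠ 0) (y : L) (rt' : L → L) (lam : ℕ → ℕ → L)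
    (ks : List ℕ) {j : ℕ} (hj : j ∈ ks) : colF Q i0 y rt' lam ks i0 j = 0 := by
  induction ks with
  | nil => cases hj
  | cons k ks ih =>
    rcases List.mem_cons.1 hj with rfl | hj'
    · simp [colF]
    · simp [colF, ih hj', zero_pow hQ]

lemma colF_ne {Q i0 : ℕ} (y : L) (rt' : L → L) (lam : ℕ → ℕ → L) (ks : List ℕ) {j0 : ℕ}
    (h0 : lam i0 j0 ≠ 0)
    (hks : ∀ k ∈ ks, (y - rt'^[k] y) ^ Q ^ (i0 + 1) ≠ (y - rt'^[j0] y) ^ Q ^ (i0 + 1)) :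
    colF Q i0 y rt' lam ks i0 j0 ≠ 0 := by
  induction ks with
  | nil => exact h0
  | cons k ks ih =>
    have h1 := ih fun k' hk' => hks k' (List.mem_cons_of_mem _ hk')
    exact mul_ne_zero (pow_ne_zero _ h1)
      (sub_ne_zero_of_ne (hks k List.mem_cons_self))

lemma bigSum_single (m n i0 j0 : ℕ) (hi0 : i0 ≤ m) (hj0 : j0 ≤ n) (lam : ℕ → ℕ → L)
    (h : ∀ i ≤ m, ∀ j ≤ n, ¬(i = i0 ∧ j = j0) → lam i j = 0) :
    bigSum x rt hrt m n lam
      = muOp L (lam i0 j0) * (tauOp p υ L) ^ i0 * (dOp p υ L x rt hrt) ^ j0 := by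
  unfold bigSum
  rw [Finset.sum_eq_single_of_mem i0 (Finset.mem_range.2 (by omega))
    (fun i hi hne => Finset.sum_eq_zero fun j hj => by
      rw [h i (Nat.lt_succ_iff.1 (Finset.mem_range.1 hi))
          j (Nat.lt_succ_iff.1 (Finset.mem_range.1 hj)) (by tauto),
        mu_zero, zero_mul, zero_mul])]
  rw [Finset.sum_eq_single_of_mem j0 (Finset.mem_range.2 (by omega))
    (fun j hj hne => by
      rw [h i0 hi0 j (Nat.lt_succ_iff.1 (Finset.mem_range.1 hj)) (by tauto),
        mu_zero, zero_mul, zero_mul])]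

section StripSec

variable [Algebra (ZMod p) L] (hx : Transcendental (ZMod p) x) (hυ : 1 ≤ υ)
variable (D : Set (AddMonoid.End (L → L)))
variable (hDadd : ∀ a ∈ D, ∀ b ∈ D, a + b ∈ D)
variable (hDneg : ∀ a ∈ D, -a ∈ D)
variable (hDleft : ∀ a ∈ opRingA p υ L x rt hrt, ∀ s ∈ D, a * s ∈ D)
variable (hDright : ∀ a ∈ opRingA p υ L x rt hrt, ∀ s ∈ D, s * a ∈ D)

include hDleft in
lemma unscale (c : L) (w : AddMonoid.End (L → L)) (hc : c ≠ 0)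
    (h : muOp L c * w ∈ D) : w ∈ D := by
  have h2 := hDleft _ (mu_mem x rt hrt c⁻¹) _ h
  rwa [← mul_assoc, mu_mul, inv_mul_cancel₀ hc, mu_one, one_mul] at h2

include hrt in
lemma strip_d_eq (i j : ℕ) :
    ((tauOp p υ L) ^ i * (dOp p υ L x rt hrt) ^ (j + 1)) * tauOp p υ L
      + -(tauOp p υ L * ((tauOp p υ L) ^ i * (dOp p υ L x rt hrt) ^ (j + 1)))
      = muOp L ((x - rt^[j + 1] x) ^ (p ^ υ) ^ i)
          * ((tauOp p υ L) ^ i * (dOp p υ L x rt hrt) ^ j) := by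
  rw [mul_assoc, dPow_tau x rt hrt j, mul_add,
    ← mul_assoc (tauOp p υ L ^ i) (tauOp p υ L), ← pow_succ,
    ← mul_assoc (tauOp p υ L ^ i) (muOp L _), tau_pow_mu, mul_assoc (muOp L _),
    ← mul_assoc (tauOp p υ L), ← pow_succ']
  abel

include hrt in
lemma strip_t_eq (i : ℕ) :
    dOp p υ L x rt hrt * (tauOp p υ L) ^ (i + 1)
      + -((tauOp p υ L) ^ (i + 1) * dOp p υ L x rt hrt)
      = muOp L (x ^ (p ^ υ) ^ i - rt x) * (tauOp p υ L) ^ i := by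
  rw [d_tauPow x rt hrt i]
  abel

include hx hυ hrt hDadd hDneg hDleft hDright in
lemma stripD (i j : ℕ)
    (h : (tauOp p υ L) ^ i * (dOp p υ L x rt hrt) ^ j ∈ D) :
    (tauOp p υ L) ^ i ∈ D := by
  induction j with
  | zero => rwa [pow_zero, mul_one] at h
  | succ j ih =>
    apply ih
    have ha := hDright _ (tau_mem x rt hrt) _ h
    have hb := hDleft _ (tau_mem x rt hrt) _ h
    have hc := hDadd _ ha _ (hDneg _ hb)
    rw [strip_d_eq x rt hrt] at hc
    refine unscale x rt hrt D hDleft _ _ ?_ hc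
    apply pow_ne_zero
    apply sub_ne_zero_of_ne
    have := rt_iter_ne x rt hrt hx hυ (a := 0) (b := j + 1) (by omega)
    simpa using this
  
include hx hυ hrt hDadd hDneg hDleft hDright in
lemma stripT (i : ℕ) (h : (tauOp p υ L) ^ i ∈ D) : (1 : AddMonoid.End (L → L)) ∈ D := by
  induction i with
  | zero => rwa [pow_zero] at h
  | succ i ih =>
    apply ih
    have ha := hDleft _ (d_mem x rt hrt) _ h
    have hb := hDright _ (d_mem x rt hrt) _ h
    have hc := hDadd _ ha _ (hDneg _ hb)
    rw [strip_t_eq x rt hrt] at hc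
    refine unscale x rt hrt D hDleft _ _ ?_ hc
    intro h0
    have hxe : x ^ (p ^ υ) ^ i = rt x := sub_eq_zero.1 h0
    have h2 : (x ^ (p ^ υ) ^ i) ^ p ^ υ = x := by rw [hxe, hrt]
    rw [powq_powq] at h2
    exact x_pow_q_ne x hx hυ (i + 1) (by omega) h2

end StripSec

end Aux

/-- `𝒜` possesses no non-trivial two-sided ideals stable with respect
to the coefficient Frobenius map `P : Σ μ_λij ∘ τ^i ∘ d^j ↦ Σ μ_(λij^q) ∘ τ^i ∘ d^j`. -/
theorem no_nontrivial_P_stable_ideal (p υ : ℕ) [Fact p.Prime] (hυ : 1 ≤ υ)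
    (L : Type*) [Field L] [IsAlgClosed L] [CharP L p] [Algebra (ZMod p) L]
    (x : L) (hx : Transcendental (ZMod p) x)
    (rt : L → L) (hrt : ∀ a : L, rt a ^ p ^ υ = a)
    (D : Set (AddMonoid.End (L → L)))
    (hDsub : D ⊆ (opRingA p υ L x rt hrt : Set (AddMonoid.End (L → L))))
    (hD0 : (0 : AddMonoid.End (L → L)) ∈ D)
    (hDadd : ∀ a ∈ D, ∀ b ∈ D, a + b ∈ D)
    (hDneg : ∀ a ∈ D, -a ∈ D)
    (hDleft : ∀ a ∈ opRingA p υ L x rt hrt, ∀ s ∈ D, a * s ∈ D)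
    (hDright : ∀ a ∈ opRingA p υ L x rt hrt, ∀ s ∈ D, s * a ∈ D)
    (hDP : ∀ (m n : ℕ) (lam : ℕ → ℕ → L),
      (∑ i ∈ Finset.range (m + 1), ∑ j ∈ Finset.range (n + 1),
          muOp L (lam i j) * (tauOp p υ L) ^ i * (dOp p υ L x rt hrt) ^ j) ∈ D →
      (∑ i ∈ Finset.range (m + 1), ∑ j ∈ Finset.range (n + 1),
          muOp L ((lam i j) ^ p ^ υ) * (tauOp p υ L) ^ i * (dOp p υ L x rt hrt) ^ j) ∈ D)
    (hDne : ∃ s ∈ D, s ≠ 0) :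
    D = (opRingA p υ L x rt hrt : Set (AddMonoid.End (L → L))) := by
  have hP : ∀ (m n : ℕ) (lam : ℕ → ℕ → L), bigSum x rt hrt m n lam ∈ D →
      bigSum x rt hrt m n (fun i j => lam i j ^ p ^ υ) ∈ D := fun m n lam h => hDP m n lam h
  have hq0 : (p : ℕ) ^ υ ≠ 0 := pow_ne_zero υ (Nat.Prime.ne_zero Fact.out)
  obtain ⟨s, hsD, hs0⟩ := hDne
  obtain ⟨m, n, lam, rfl⟩ := exists_rep x rt hrt (hDsub hsD)
  -- find a nonzero coefficient
  have hex : ∃ i0, i0 ≤ m ∧ ∃ j0, j0 ≤ n ∧ lam i0 j0 ≠ 0 := by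
    by_contra hno
    push_neg at hno
    apply hs0
    have he : bigSum x rt hrt m n lam = bigSum x rt hrt m n (fun _ _ => 0) :=
      bigSum_congr x rt hrt fun i hi j hj => hno i hi j hj
    rw [he, bigSum_zero]
  obtain ⟨i0, hi0, j0, hj0, hne⟩ := hex
  -- transcendence facts
  have factA : ∀ k, k ≠ i0 →
      (x ^ (p ^ υ) ^ k - x) ^ p ^ υ ≠ (x ^ (p ^ υ) ^ i0 - x) ^ p ^ υ := by
    intro k hk heq
    apply hk
    have h1 : x ^ (p ^ υ) ^ k - x = x ^ (p ^ υ) ^ i0 - x := powq_inj p υ L heq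
    exact x_pow_q_inj x hx hυ (sub_left_inj.1 h1)
  have factC : ∀ k, k ≠ j0 →
      (x - rt^[k] x) ^ (p ^ υ) ^ (i0 + 1) ≠ (x - rt^[j0] x) ^ (p ^ υ) ^ (i0 + 1) := by
    intro k hk heq
    have h1 : x - rt^[k] x = x - rt^[j0] x := frob_iter_inj (i0 + 1) heq
    exact rt_iter_ne x rt hrt hx hυ hk (sub_right_inj.1 h1)
  -- row stage
  have hrowIter : ∀ ks : List ℕ, bigSum x rt hrt m n (rowF (p ^ υ) x lam ks) ∈ D := by
    intro ks
    induction ks with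
    | nil => exact hsD
    | cons k ks ih =>
      exact killRowD x rt hrt D hDadd hDneg hDleft hDright hP m n k
        (rowF (p ^ υ) x lam ks) ih
  set ns : List ℕ := (List.range (m + 1)).filter (fun k => k ≠ i0) with hns
  have hmemns : ∀ i, i ≤ m → i ≠ i0 → i ∈ ns := by
    intro i hi hne'
    rw [hns, List.mem_filter]
    exact ⟨List.mem_range.2 (by omega), by simpa using hne'⟩
  have hknins : ∀ k ∈ ns, k ≠ i0 := by
    intro k hk
    rw [hns, List.mem_filter] at hk
    simpa using hk.2
  have h2 : bigSum x rt hrt m n (rowF (p ^ υ) x lam ns) ∈ D := hrowIter ns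
  have hlam2ne : rowF (p ^ υ) x lam ns i0 j0 ≠ 0 :=
    rowF_ne x lam ns hne (fun k hk => factA k (hknins k hk))
  have hlam2zero : ∀ i, i ≤ m → i ≠ i0 → ∀ j, rowF (p ^ υ) x lam ns i j = 0 :=
    fun i hi hne' j => rowF_zero hq0 x lam ns (hmemns i hi hne') j
  -- column stage
  have hcolIter : ∀ ks : List ℕ,
      bigSum x rt hrt m n (colF (p ^ υ) i0 x rt (rowF (p ^ υ) x lam ns) ks) ∈ D := by
    intro ks
    induction ks with
    | nil => exact h2
    | cons k ks ih =>
      exact killColD x rt hrt D hDadd hDneg hDleft hDright hP m n i0 k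
        (colF (p ^ υ) i0 x rt (rowF (p ^ υ) x lam ns) ks) ih
  set ns' : List ℕ := (List.range (n + 1)).filter (fun k => k ≠ j0) with hns'
  have hmemns' : ∀ j, j ≤ n → j ≠ j0 → j ∈ ns' := by
    intro j hj hne'
    rw [hns', List.mem_filter]
    exact ⟨List.mem_range.2 (by omega), by simpa using hne'⟩
  have hknins' : ∀ k ∈ ns', k ≠ j0 := by
    intro k hk
    rw [hns', List.mem_filter] at hk
    simpa using hk.2
  have h3 : bigSum x rt hrt m n (colF (p ^ υ) i0 x rt (rowF (p ^ υ) x lam ns) ns') ∈ D :=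
    hcolIter ns'
  have hlam3ne : colF (p ^ υ) i0 x rt (rowF (p ^ υ) x lam ns) ns' i0 j0 ≠ 0 :=
    colF_ne x rt (rowF (p ^ υ) x lam ns) ns' hlam2ne
      (fun k hk => factC k (hknins' k hk))
  have hlam3zero : ∀ i ≤ m, ∀ j ≤ n, ¬(i = i0 ∧ j = j0) →
      colF (p ^ υ) i0 x rt (rowF (p ^ υ) x lam ns) ns' i j = 0 := by
    intro i hi j hj hnij
    by_cases hii : i = i0
    · subst hii
      have hjj : j ≠ j0 := fun hjj => hnij ⟨rfl, hjj⟩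
      exact colF_zero_col hq0 x rt (rowF (p ^ υ) x lam ns) ns' (hmemns' j hj hjj)
    · exact colF_zero_of hq0 x rt (rowF (p ^ υ) x lam ns) ns' (hlam2zero i hi hii j)
  rw [bigSum_single x rt hrt m n i0 j0 hi0 hj0 _ hlam3zero, mul_assoc] at h3
  have h4 := unscale x rt hrt D hDleft _ _ hlam3ne h3
  have h5 := stripD x rt hrt hx hυ D hDadd hDneg hDleft hDright i0 j0 h4
  have h1D := stripT x rt hrt hx hυ D hDadd hDneg hDleft hDright i0 h5
  refine Set.Subset.antisymm hDsub fun a ha => ?_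
  have h6 := hDleft a ha 1 h1D
  rwa [mul_one] at h6
end
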